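/- arXiv:1906.09047 — 4 statements merged into one kernel-verified Lean document; each statement's English description precedes it below -/
import Mathlib

section
/- For n ≥ 2 and k ∈ {2, ..., ⌊n/2⌋}, the drift Δ(·) of the (1+1) EA on OneMax satisfies 1/Δ(k−1) − 1/Δ(k) ≥ n/(ek²). -/
open Finset

/-- Drift `Δ_n(k)`: the expected one-step decrease of the number of zero-bits of
the (1+1) EA (mutation rate `1/n`) on OneMax from a state with `k` zero-bits. -/
noncomputable def Delta (n k : ℕ) : ℝ :=
  ∑ l ∈ Icc 1 k, ∑ j ∈ range (l + 1),
    ((l : ℝ) - j) * (k.choose l) * ((n - k).choose j) *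
      (1 / n) ^ (l + j) * (1 - 1 / n) ^ (n - l - j)

namespace InvDeltaAux

/-- Binomial pmf term. -/
noncomputable def P (p q : ℝ) (a x : ℕ) : ℝ := (a.choose x : ℝ) * p ^ x * q ^ (a - x)

/-- Positive part of `x - y`. -/
noncomputable def f (x y : ℕ) : ℝ := max ((x : ℝ) - (y : ℝ)) 0

noncomputable def T (p q : ℝ) (a b : ℕ) : ℝ :=
  ∑ x ∈ range (a + 1), ∑ y ∈ range (b + 1), f x y * P p q a x * P p q b y

variable (p q : ℝ)

lemma P_nonneg (hp : 0 ≤ p) (hq : 0 ≤ q) (a x : ℕ) : 0 ≤ P p q a x := by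
  unfold P; positivity

lemma f_nonneg (x y : ℕ) : 0 ≤ f x y := le_max_right _ _

lemma f_zero_left (y : ℕ) : f 0 y = 0 := by
  simp only [f, Nat.cast_zero, zero_sub]
  exact max_eq_right (by { have : (0:ℝ) ≤ (y:ℝ) := Nat.cast_nonneg y; linarith })

lemma f_eq_zero_of_lt {x y : ℕ} (h : x < y) : f x y = 0 := by
  apply max_eq_right
  have : (x : ℝ) ≤ y := by exact_mod_cast h.le
  linarith

lemma f_eq_of_le {x y : ℕ} (h : y ≤ x) : f x y = (x : ℝ) - y := by
  apply max_eq_left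
  have : (y : ℝ) ≤ x := by exact_mod_cast h
  linarith

lemma f_mono (x y : ℕ) : f x (y + 1) ≤ f (x + 1) y := by
  simp only [f, Nat.cast_add, Nat.cast_one]
  exact max_le_max (by linarith) le_rfl

lemma f_le (x y : ℕ) : f x y ≤ (x : ℝ) :=
  max_le (by have : (0:ℝ) ≤ y := Nat.cast_nonneg y; linarith) (Nat.cast_nonneg x)

lemma P_zero (a : ℕ) : P p q a 0 = q ^ a := by simp [P]

lemma P_eq_zero {a x : ℕ} (h : a < x) : P p q a x = 0 := by
  simp [P, Nat.choose_eq_zero_of_lt h]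

lemma sum_P (hpq : p + q = 1) (a : ℕ) : ∑ x ∈ range (a + 1), P p q a x = 1 := by
  have h := add_pow p q a
  rw [hpq, one_pow] at h
  rw [h]
  refine sum_congr rfl fun x _ => ?_
  simp only [P]; ring

lemma sum_mul_P (hpq : p + q = 1) (a : ℕ) :
    ∑ x ∈ range (a + 1), (x : ℝ) * P p q a x = (a : ℝ) * p := by
  cases a with
  | zero => simp [P]
  | succ a =>
    rw [Finset.sum_range_succ' (fun x => (x : ℝ) * P p q (a + 1) x) (a + 1)]
    simp only [Nat.cast_zero, zero_mul, add_zero]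
    have h1 : ∀ x ∈ range (a + 1),
        ((x + 1 : ℕ) : ℝ) * P p q (a + 1) (x + 1) = ((a : ℝ) + 1) * p * P p q a x := by
      intro x _
      have h2 : (((a + 1).choose (x + 1) : ℝ)) * ((x : ℝ) + 1) = ((a : ℝ) + 1) * (a.choose x : ℝ) := by
        exact_mod_cast congrArg (Nat.cast (R := ℝ)) (Nat.add_one_mul_choose_eq a x).symm
      unfold P
      have hsub : a + 1 - (x + 1) = a - x := by omega
      rw [hsub]
      push_cast
      linear_combination (p ^ x * p * q ^ (a - x)) * h2
    rw [sum_congr rfl h1, ← Finset.mul_sum, sum_P p q hpq a, mul_one]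
    push_cast; ring

lemma P_succ (a x : ℕ) : P p q (a + 1) (x + 1) = q * P p q a (x + 1) + p * P p q a x := by
  unfold P
  rw [Nat.choose_succ_succ, Nat.succ_sub_succ]
  by_cases h : x + 1 ≤ a
  · have h1 : a - x = (a - (x + 1)) + 1 := by omega
    rw [h1]
    push_cast
    ring
  · have h0 : a.choose (x + 1) = 0 := Nat.choose_eq_zero_of_lt (by omega)
    have h2 : a - x = 0 := by omega
    have h3 : a - (x + 1) = 0 := by omega
    rw [h0, h2, h3]
    push_cast
    ring

lemma P_succ_zero (a : ℕ) : P p q (a + 1) 0 = q * P p q a 0 := by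
  simp [P, pow_succ]; ring

lemma sum_g_P_succ (a : ℕ) (g : ℕ → ℝ) :
    ∑ x ∈ range (a + 1 + 1), g x * P p q (a + 1) x
      = q * ∑ x ∈ range (a + 1), g x * P p q a x
        + p * ∑ x ∈ range (a + 1), g (x + 1) * P p q a x := by
  rw [Finset.sum_range_succ' (fun x => g x * P p q (a + 1) x) (a + 1)]
  have h1 : ∀ x ∈ range (a + 1), g (x + 1) * P p q (a + 1) (x + 1)
      = q * (g (x + 1) * P p q a (x + 1)) + p * (g (x + 1) * P p q a x) := by
    intro x _; rw [P_succ]; ring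
  rw [sum_congr rfl h1, Finset.sum_add_distrib, ← Finset.mul_sum, ← Finset.mul_sum, P_succ_zero]
  have h2 : ∑ x ∈ range (a + 1), g (x + 1) * P p q a (x + 1)
      = (∑ x ∈ range (a + 1), g x * P p q a x) - g 0 * P p q a 0 := by
    have h3 := Finset.sum_range_succ' (fun x => g x * P p q a x) a
    rw [Finset.sum_range_succ, P_eq_zero p q (by omega : a < a + 1), mul_zero, add_zero]
    linarith [h3]
  rw [h2]
  ring

lemma double (hpq : p + q = 1) (F : ℕ → ℕ → ℝ) (a b : ℕ) :
    ∑ x ∈ range (a + 1 + 1), ∑ y ∈ range (b + 1), F x y * P p q (a + 1) x * P p q b y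
      = q * ∑ x ∈ range (a + 1), ∑ y ∈ range (b + 1), F x y * P p q a x * P p q b y
        + p * ∑ x ∈ range (a + 1), ∑ y ∈ range (b + 1), F (x + 1) y * P p q a x * P p q b y := by
  have e1 : ∀ (c x : ℕ) (h : ℕ → ℝ),
      ∑ y ∈ range (b + 1), h y * P p q c x * P p q b y
        = (∑ y ∈ range (b + 1), h y * P p q b y) * P p q c x := by
    intro c x h
    rw [Finset.sum_mul]
    exact sum_congr rfl fun y _ => by ring
  calc ∑ x ∈ range (a + 1 + 1), ∑ y ∈ range (b + 1), F x y * P p q (a + 1) x * P p q b y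
      = ∑ x ∈ range (a + 1 + 1), (∑ y ∈ range (b + 1), F x y * P p q b y) * P p q (a + 1) x :=
        sum_congr rfl fun x _ => e1 (a + 1) x (F x)
    _ = q * ∑ x ∈ range (a + 1), (∑ y ∈ range (b + 1), F x y * P p q b y) * P p q a x
        + p * ∑ x ∈ range (a + 1), (∑ y ∈ range (b + 1), F (x + 1) y * P p q b y) * P p q a x :=
        sum_g_P_succ p q a (fun x => ∑ y ∈ range (b + 1), F x y * P p q b y)
    _ = _ := by
        congr 1
        · congr 1; exact sum_congr rfl fun x _ => (e1 a x (F x)).symm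
        · congr 1; exact sum_congr rfl fun x _ => (e1 a x (F (x + 1))).symm

lemma T_succ_left (hpq : p + q = 1) (a b : ℕ) :
    T p q (a + 1) b = q * T p q a b
      + p * ∑ x ∈ range (a + 1), ∑ y ∈ range (b + 1), f (x + 1) y * P p q a x * P p q b y := by
  unfold T
  exact double p q hpq f a b

lemma T_succ_right (hpq : p + q = 1) (a b : ℕ) :
    T p q a (b + 1) = q * T p q a b
      + p * ∑ x ∈ range (a + 1), ∑ y ∈ range (b + 1), f x (y + 1) * P p q a x * P p q b y := by
  have h := double p q hpq (fun y x => f x y) b a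
  unfold T
  calc ∑ x ∈ range (a + 1), ∑ y ∈ range (b + 1 + 1), f x y * P p q a x * P p q (b + 1) y
      = ∑ y ∈ range (b + 1 + 1), ∑ x ∈ range (a + 1), f x y * P p q (b + 1) y * P p q a x := by
        rw [Finset.sum_comm]
        exact sum_congr rfl fun y _ => sum_congr rfl fun x _ => by ring
    _ = q * ∑ y ∈ range (b + 1), ∑ x ∈ range (a + 1), f x y * P p q b y * P p q a x
        + p * ∑ y ∈ range (b + 1), ∑ x ∈ range (a + 1), f x (y + 1) * P p q b y * P p q a x := h
    _ = _ := by
        congr 1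
        · congr 1
          rw [Finset.sum_comm]
          exact sum_congr rfl fun x _ => sum_congr rfl fun y _ => by ring
        · congr 1
          rw [Finset.sum_comm]
          exact sum_congr rfl fun x _ => sum_congr rfl fun y _ => by ring

lemma T_nonneg (hp : 0 ≤ p) (hq : 0 ≤ q) (a b : ℕ) : 0 ≤ T p q a b := by
  refine sum_nonneg fun x _ => sum_nonneg fun y _ => ?_
  exact mul_nonneg (mul_nonneg (f_nonneg x y) (P_nonneg p q hp hq a x)) (P_nonneg p q hp hq b y)

lemma T_step (hp : 0 ≤ p) (hq : 0 ≤ q) (hpq : p + q = 1) (a b : ℕ) :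
    T p q a (b + 1) + p * q ^ (a + b) ≤ T p q (a + 1) b := by
  rw [T_succ_left p q hpq, T_succ_right p q hpq]
  have key : q ^ (a + b)
      + ∑ x ∈ range (a + 1), ∑ y ∈ range (b + 1), f x (y + 1) * P p q a x * P p q b y
      ≤ ∑ x ∈ range (a + 1), ∑ y ∈ range (b + 1), f (x + 1) y * P p q a x * P p q b y := by
    have hd : ∑ x ∈ range (a + 1), ∑ y ∈ range (b + 1), f (x + 1) y * P p q a x * P p q b y
        - ∑ x ∈ range (a + 1), ∑ y ∈ range (b + 1), f x (y + 1) * P p q a x * P p q b y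
        = ∑ x ∈ range (a + 1), ∑ y ∈ range (b + 1),
            (f (x + 1) y - f x (y + 1)) * P p q a x * P p q b y := by
      rw [← Finset.sum_sub_distrib]
      refine sum_congr rfl fun x _ => ?_
      rw [← Finset.sum_sub_distrib]
      exact sum_congr rfl fun y _ => by ring
    have hnn : ∀ x y : ℕ, 0 ≤ (f (x + 1) y - f x (y + 1)) * P p q a x * P p q b y := by
      intro x y
      exact mul_nonneg (mul_nonneg (by linarith [f_mono x y]) (P_nonneg p q hp hq a x))
        (P_nonneg p q hp hq b y)
    have hsingle : q ^ (a + b)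
        ≤ ∑ x ∈ range (a + 1), ∑ y ∈ range (b + 1),
            (f (x + 1) y - f x (y + 1)) * P p q a x * P p q b y := by
      have h00 : (f 1 0 - f 0 1) * P p q a 0 * P p q b 0 = q ^ (a + b) := by
        have : f 1 0 - f 0 1 = 1 := by norm_num [f]
        rw [this, P_zero, P_zero, pow_add]; ring
      calc q ^ (a + b) = (f 1 0 - f 0 1) * P p q a 0 * P p q b 0 := h00.symm
        _ ≤ ∑ y ∈ range (b + 1), (f 1 y - f 0 (y + 1)) * P p q a 0 * P p q b y :=
            Finset.single_le_sum (fun y _ => hnn 0 y) (mem_range.mpr (by omega))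
        _ ≤ ∑ x ∈ range (a + 1), ∑ y ∈ range (b + 1),
              (f (x + 1) y - f x (y + 1)) * P p q a x * P p q b y :=
            Finset.single_le_sum
              (fun x _ => sum_nonneg fun y _ => hnn x y) (mem_range.mpr (by omega))
    linarith [hd, hsingle]
  nlinarith [key, hp]

lemma T_le (hp : 0 ≤ p) (hq : 0 ≤ q) (hpq : p + q = 1) (a b : ℕ) :
    T p q a b ≤ (a : ℝ) * p := by
  unfold T
  calc ∑ x ∈ range (a + 1), ∑ y ∈ range (b + 1), f x y * P p q a x * P p q b y
      ≤ ∑ x ∈ range (a + 1), ∑ y ∈ range (b + 1), (x : ℝ) * P p q a x * P p q b y := by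
        refine sum_le_sum fun x _ => sum_le_sum fun y _ => ?_
        exact mul_le_mul_of_nonneg_right
          (mul_le_mul_of_nonneg_right (f_le x y) (P_nonneg p q hp hq a x))
          (P_nonneg p q hp hq b y)
    _ = ∑ x ∈ range (a + 1), (x : ℝ) * P p q a x := by
        refine sum_congr rfl fun x _ => ?_
        rw [← Finset.mul_sum, sum_P p q hpq b, mul_one]
    _ = (a : ℝ) * p := sum_mul_P p q hpq a

lemma Delta_eq (n k : ℕ) (hk : 1 ≤ k) (h2 : 2 * k ≤ n) :
    Delta n k = T (1 / (n : ℝ)) (1 - 1 / (n : ℝ)) k (n - k) := by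
  set p : ℝ := 1 / (n : ℝ)
  set q : ℝ := 1 - 1 / (n : ℝ)
  unfold Delta T
  symm
  rw [Finset.sum_subset (by intro x hx; simp only [mem_Icc, mem_range] at *; omega :
    Icc 1 k ⊆ range (k + 1))]
  · refine sum_congr rfl fun x hx => ?_
    rcases Nat.eq_zero_or_pos x with hx0 | hx0
    · subst hx0
      rw [Finset.sum_eq_zero fun y _ => by rw [f_zero_left, zero_mul, zero_mul]]
      refine (Finset.sum_eq_zero fun y hy => ?_).symm
      have : y = 0 := by simp only [mem_range] at hy; omega
      subst this; simp
    have hx1 : 1 ≤ x ∧ x ≤ k := ⟨hx0, by simp only [mem_range] at hx; omega⟩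
    rw [← Finset.sum_subset (by intro y hy; simp only [mem_range] at *; omega :
      range (x + 1) ⊆ range (n - k + 1))]
    · refine sum_congr rfl fun y hy => ?_
      have hy1 : y ≤ x := by simp only [mem_range] at hy; omega
      rw [f_eq_of_le hy1]
      unfold p q
      have he : (k - x) + ((n - k) - y) = n - x - y := by omega
      rw [show (1 / (n:ℝ)) ^ (x + y) = (1/(n:ℝ))^x * (1/(n:ℝ))^y from pow_add _ _ _,
        show (1 - 1/(n:ℝ)) ^ (n - x - y)
          = (1 - 1/(n:ℝ))^(k - x) * (1 - 1/(n:ℝ))^((n - k) - y) from by rw [← pow_add, he]]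
      unfold P
      ring
    · intro y hy hyn
      have : x < y := by simp only [mem_range] at *; omega
      rw [f_eq_zero_of_lt this, zero_mul, zero_mul]
  · intro x hx hxn
    have hx0 : x = 0 := by simp only [mem_Icc, mem_range] at *; omega
    subst hx0
    refine Finset.sum_eq_zero fun y hy => ?_
    have : y = 0 := by simp only [mem_range] at hy; omega
    subst this; simp

lemma exp_le_aux (m : ℕ) (hm : 1 ≤ m) :
    Real.exp (-1) ≤ (1 - 1 / ((m : ℝ) + 1)) ^ m := by
  have hm' : (0 : ℝ) < m := by exact_mod_cast hm
  have h1 : Real.exp (-(1 / (m : ℝ))) ≤ 1 - 1 / ((m : ℝ) + 1) := by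
    have h2 : 1 / (m : ℝ) + 1 ≤ Real.exp (1 / (m : ℝ)) := Real.add_one_le_exp _
    have h3 : (0 : ℝ) < 1 / (m : ℝ) + 1 := by positivity
    have h4 : (Real.exp (1 / (m : ℝ)))⁻¹ ≤ (1 / (m : ℝ) + 1)⁻¹ := by
      exact inv_anti₀ h3 h2
    rw [Real.exp_neg]
    calc (Real.exp (1 / (m : ℝ)))⁻¹ ≤ (1 / (m : ℝ) + 1)⁻¹ := h4
      _ = 1 - 1 / ((m : ℝ) + 1) := by
          rw [eq_sub_iff_add_eq, inv_eq_one_div]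
          field_simp
          ring
  have h5 : Real.exp (-1) = (Real.exp (-(1 / (m : ℝ)))) ^ m := by
    rw [← Real.exp_nat_mul]
    congr 1
    field_simp
  rw [h5]
  exact pow_le_pow_left₀ (Real.exp_nonneg _) h1 m

end InvDeltaAux


open InvDeltaAux

/-- For `k ∈ {2, …, ⌊n/2⌋}` the inverse drifts of the (1+1) EA on OneMax satisfy
`1/Δ(k−1) − 1/Δ(k) ≥ n/(e k²)`. -/
theorem inv_delta_diff_lower (n k : ℕ) (hn : 2 ≤ n) (hk2 : 2 ≤ k)
    (hkn : k ≤ n / 2) :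
    (n : ℝ) / (Real.exp 1 * k ^ 2) ≤ 1 / Delta n (k - 1) - 1 / Delta n k := by
  have h2k : 2 * k ≤ n := by omega
  set p : ℝ := 1 / (n : ℝ) with hpdef
  set q : ℝ := 1 - 1 / (n : ℝ) with hqdef
  have hn0 : (0 : ℝ) < n := by exact_mod_cast (by omega : 0 < n)
  have hn1 : (1 : ℝ) < n := by exact_mod_cast (by omega : 1 < n)
  have hp : 0 < p := by rw [hpdef]; positivity
  have hq : 0 < q := by rw [hqdef]; rw [sub_pos, div_lt_one hn0]; exact hn1
  have hpq : p + q = 1 := by rw [hpdef, hqdef]; ring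
  have hk0 : (0 : ℝ) < k := by exact_mod_cast (by omega : 0 < k)
  -- identification with T
  have hA : Delta n (k - 1) = T p q (k - 1) (n - k + 1) := by
    rw [Delta_eq n (k - 1) (by omega) (by omega)]
    rw [show n - (k - 1) = n - k + 1 from by omega]
  have hB : Delta n k = T p q k (n - k) := Delta_eq n k (by omega) h2k
  -- step inequality
  have hstep : T p q (k - 1) (n - k + 1) + p * q ^ (n - 1) ≤ T p q k (n - k) := by
    have h := T_step p q hp.le hq.le hpq (k - 1) (n - k)
    rw [show k - 1 + 1 = k from by omega, show k - 1 + (n - k) = n - 1 from by omega] at h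
    exact h
  -- positivity of Delta (k-1)
  have hApos : 0 < Delta n (k - 1) := by
    have h := T_step p q hp.le hq.le hpq (k - 2) (n - k + 1)
    rw [show k - 2 + 1 = k - 1 from by omega,
      show k - 2 + (n - k + 1) = n - 1 from by omega] at h
    have h0 := T_nonneg p q hp.le hq.le (k - 2) (n - k + 1 + 1)
    have hpos : 0 < p * q ^ (n - 1) := by positivity
    rw [hA]; linarith
  have hBpos : 0 < Delta n k := by
    have h0 := T_nonneg p q hp.le hq.le (k - 1) (n - k + 1)
    rw [hB]
    have hpos : 0 < p * q ^ (n - 1) := by positivity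
    linarith
  -- upper bounds
  have hAle : Delta n (k - 1) ≤ (k : ℝ) * p := by
    rw [hA]
    calc T p q (k - 1) (n - k + 1) ≤ ((k - 1 : ℕ) : ℝ) * p := T_le p q hp.le hq.le hpq _ _
      _ ≤ (k : ℝ) * p :=
        mul_le_mul_of_nonneg_right (by exact_mod_cast (by omega : k - 1 ≤ k)) hp.le
  have hBle : Delta n k ≤ (k : ℝ) * p := hB ▸ T_le p q hp.le hq.le hpq k (n - k)
  -- lower bound on the gap
  have hgap : p * (Real.exp 1)⁻¹ ≤ Delta n k - Delta n (k - 1) := by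
    have hqe : Real.exp (-1) ≤ q ^ (n - 1) := by
      have h := exp_le_aux (n - 1) (by omega)
      have hc : ((n - 1 : ℕ) : ℝ) + 1 = (n : ℝ) := by
        push_cast [Nat.cast_sub (by omega : 1 ≤ n)]; ring
      rwa [hc, ← hqdef] at h
    rw [Real.exp_neg] at hqe
    have := mul_le_mul_of_nonneg_left hqe hp.le
    rw [hA, hB]
    linarith
  -- final computation
  have hE : (0 : ℝ) < Real.exp 1 := Real.exp_pos 1
  have h1 : 1 / Delta n (k - 1) - 1 / Delta n k
      = (Delta n k - Delta n (k - 1)) / (Delta n (k - 1) * Delta n k) := by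
    field_simp
  have hABpos : 0 < Delta n (k - 1) * Delta n k := mul_pos hApos hBpos
  have hABle : Delta n (k - 1) * Delta n k ≤ ((k : ℝ) * p) * ((k : ℝ) * p) :=
    mul_le_mul hAle hBle hBpos.le (by positivity)
  have h2 : (p * (Real.exp 1)⁻¹) / (((k : ℝ) * p) * ((k : ℝ) * p))
      ≤ (Delta n k - Delta n (k - 1)) / (Delta n (k - 1) * Delta n k) := by
    have hPE : 0 < p * (Real.exp 1)⁻¹ := by positivity
    exact div_le_div₀ (by linarith) hgap hABpos hABle
  have h3 : (n : ℝ) / (Real.exp 1 * k ^ 2)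
      = (p * (Real.exp 1)⁻¹) / (((k : ℝ) * p) * ((k : ℝ) * p)) := by
    rw [hpdef]
    field_simp
  linarith [h1, h2, h3]
end

section
/- For k ∈ {1, ..., ⌊n/2⌋}, the error term η(k) = Σ_{ℓ=0}^{k−1} p(k,ℓ) Σ_{j=ℓ+1}^{k} 1/Δ(j) of the (1+1) EA on OneMax satisfies η(k) ≤ 1 + 2e^{5/2}/(n−1). -/
open Finset

/-- One-step transition probability of the (1+1) EA on OneMax from a state with
`k` zero-bits to a state with `j` zero-bits. -/
noncomputable def pOneMax (n k j : ℕ) : ℝ :=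
  if j ≤ k then
    ∑ i ∈ range (min j (n - k) + 1),
      (k.choose (k - j + i)) * ((n - k).choose i) *
        (1 / n : ℝ) ^ (k - j + 2 * i) * (1 - 1 / n) ^ (n - (k - j) - 2 * i)
  else 0

namespace EtaAux

noncomputable def Tsum (n a b : ℕ) (w : ℕ → ℕ → ℝ) : ℝ :=
  ∑ l ∈ range (a+1), ∑ j ∈ range (b+1),
    w l j * (a.choose l : ℝ) * ((b.choose j : ℝ)) * (1/(n:ℝ))^(l+j) * (1 - 1/(n:ℝ))^(a+b-l-j)

noncomputable def w0 : ℕ → ℕ → ℝ := fun l j => max ((l:ℝ) - j) 0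

lemma binom_step (a : ℕ) (x y : ℝ) (v : ℕ → ℝ) :
    ∑ l ∈ range (a+2), ((a+1).choose l : ℝ) * x^l * y^(a+1-l) * v l
    = y * (∑ l ∈ range (a+1), (a.choose l : ℝ) * x^l * y^(a-l) * v l)
    + x * (∑ l ∈ range (a+1), (a.choose l : ℝ) * x^l * y^(a-l) * v (l+1)) := by
  rw [Finset.sum_range_succ' _ (a+1)]
  have h1 : ∀ l ∈ range (a+1), ((a+1).choose (l+1) : ℝ) * x^(l+1) * y^(a+1-(l+1)) * v (l+1)
      = (a.choose l : ℝ) * x^(l+1) * y^(a-l) * v (l+1)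
        + (a.choose (l+1) : ℝ) * x^(l+1) * y^(a-l) * v (l+1) := by
    intro l hl
    rw [Nat.choose_succ_succ]
    push_cast [Nat.succ_eq_add_one]
    ring
  rw [Finset.sum_congr rfl h1, Finset.sum_add_distrib]
  have h2 : ∑ l ∈ range (a+1), (a.choose l : ℝ) * x^(l+1) * y^(a-l) * v (l+1)
      = x * ∑ l ∈ range (a+1), (a.choose l : ℝ) * x^l * y^(a-l) * v (l+1) := by
    rw [Finset.mul_sum]; apply Finset.sum_congr rfl; intro l hl; ring
  have h3 : y * (∑ l ∈ range (a+1), (a.choose l : ℝ) * x^l * y^(a-l) * v l)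
      = (∑ l ∈ range a, (a.choose (l+1) : ℝ) * x^(l+1) * y^(a-l) * v (l+1))
        + ((a+1).choose 0 : ℝ) * x^0 * y^(a+1-0) * v 0 := by
    rw [Finset.mul_sum, Finset.sum_range_succ' _ a]
    congr 1
    · apply Finset.sum_congr rfl; intro l hl
      simp only [mem_range] at hl
      have : a - l = (a - (l+1)) + 1 := by omega
      rw [this, pow_succ]; ring
    · simp [pow_succ]; ring
  have h4 : ∑ l ∈ range (a+1), (a.choose (l+1) : ℝ) * x^(l+1) * y^(a-l) * v (l+1)
      = ∑ l ∈ range a, (a.choose (l+1) : ℝ) * x^(l+1) * y^(a-l) * v (l+1) := by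
    rw [Finset.sum_range_succ]
    simp
  rw [h4, h3, h2]; ring

-- rewrite Tsum rows in binom_step-compatible shape
lemma Tsum_eq (n a b : ℕ) (w : ℕ → ℕ → ℝ) :
    Tsum n a b w = ∑ l ∈ range (a+1), (a.choose l : ℝ) * (1/(n:ℝ))^l * (1-1/(n:ℝ))^(a-l) *
      (∑ j ∈ range (b+1), w l j * (b.choose j : ℝ) * (1/(n:ℝ))^j * (1-1/(n:ℝ))^(b-j)) := by
  unfold Tsum
  apply Finset.sum_congr rfl; intro l hl
  rw [Finset.mul_sum]
  apply Finset.sum_congr rfl; intro j hj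
  simp only [mem_range] at hl hj
  have h1 : a + b - l - j = (a - l) + (b - j) := by omega
  have h2 : l + j = l + j := rfl
  rw [h1, pow_add, pow_add]; ring

lemma Tsum_succ_left (n a b : ℕ) (w : ℕ → ℕ → ℝ) :
    Tsum n (a+1) b w = (1-1/(n:ℝ)) * Tsum n a b w + (1/(n:ℝ)) * Tsum n a b (fun l j => w (l+1) j) := by
  rw [Tsum_eq, Tsum_eq, Tsum_eq]
  exact binom_step a (1/(n:ℝ)) (1-1/(n:ℝ)) _

lemma Tsum_comm (n a b : ℕ) (w : ℕ → ℕ → ℝ) :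
    Tsum n a b w = Tsum n b a (fun j l => w l j) := by
  unfold Tsum
  rw [Finset.sum_comm]
  apply Finset.sum_congr rfl; intro j hj
  apply Finset.sum_congr rfl; intro l hl
  simp only [mem_range] at hl hj
  have h1 : a + b - l - j = b + a - j - l := by omega
  have h2 : l + j = j + l := by omega
  rw [h1, h2]; ring

lemma Tsum_succ_right (n a b : ℕ) (w : ℕ → ℕ → ℝ) :
    Tsum n a (b+1) w = (1-1/(n:ℝ)) * Tsum n a b w + (1/(n:ℝ)) * Tsum n a b (fun l j => w l (j+1)) := by
  rw [Tsum_comm, Tsum_succ_left, Tsum_comm n a b, Tsum_comm n a b]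

lemma Tsum_mono (n a b : ℕ) (hn : 1 ≤ n) (w w' : ℕ → ℕ → ℝ) (h : ∀ l j, w l j ≤ w' l j) :
    Tsum n a b w ≤ Tsum n a b w' := by
  unfold Tsum
  apply Finset.sum_le_sum; intro l _
  apply Finset.sum_le_sum; intro j _
  have hq : (0:ℝ) ≤ 1 - 1/(n:ℝ) := by
    have : (1:ℝ) ≤ (n:ℝ) := by exact_mod_cast hn
    have : 1/(n:ℝ) ≤ 1 := by
      rw [div_le_one (by linarith)]; linarith
    linarith
  have hp : (0:ℝ) ≤ 1/(n:ℝ) := by positivity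
  apply mul_le_mul_of_nonneg_right _ (by positivity)
  apply mul_le_mul_of_nonneg_right _ (by positivity)
  apply mul_le_mul_of_nonneg_right _ (by positivity)
  apply mul_le_mul_of_nonneg_right (h l j) (by positivity)

lemma Tsum_mass (n a b : ℕ) (hn : 1 ≤ n) : Tsum n a b (fun _ _ => 1) = 1 := by
  rw [Tsum_eq]
  have hpq : (1/(n:ℝ)) + (1 - 1/(n:ℝ)) = 1 := by ring
  have hb : ∑ j ∈ range (b+1), (1:ℝ) * (b.choose j : ℝ) * (1/(n:ℝ))^j * (1-1/(n:ℝ))^(b-j) = 1 := by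
    calc ∑ j ∈ range (b+1), (1:ℝ) * (b.choose j : ℝ) * (1/(n:ℝ))^j * (1-1/(n:ℝ))^(b-j)
        = ∑ j ∈ range (b+1), (1/(n:ℝ))^j * (1-1/(n:ℝ))^(b-j) * (b.choose j : ℝ) := by
          apply Finset.sum_congr rfl; intro j _; ring
      _ = ((1/(n:ℝ)) + (1-1/(n:ℝ)))^b := (add_pow _ _ _).symm
      _ = 1 := by rw [hpq, one_pow]
  have ha : ∑ l ∈ range (a+1), (a.choose l : ℝ) * (1/(n:ℝ))^l * (1-1/(n:ℝ))^(a-l) * 1 = 1 := by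
    calc ∑ l ∈ range (a+1), (a.choose l : ℝ) * (1/(n:ℝ))^l * (1-1/(n:ℝ))^(a-l) * 1
        = ∑ l ∈ range (a+1), (1/(n:ℝ))^l * (1-1/(n:ℝ))^(a-l) * (a.choose l : ℝ) := by
          apply Finset.sum_congr rfl; intro l _; ring
      _ = ((1/(n:ℝ)) + (1-1/(n:ℝ)))^a := (add_pow _ _ _).symm
      _ = 1 := by rw [hpq, one_pow]
  calc ∑ l ∈ range (a+1), (a.choose l : ℝ) * (1/(n:ℝ))^l * (1-1/(n:ℝ))^(a-l) *
      (∑ j ∈ range (b+1), (1:ℝ) * (b.choose j : ℝ) * (1/(n:ℝ))^j * (1-1/(n:ℝ))^(b-j))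
      = ∑ l ∈ range (a+1), (a.choose l : ℝ) * (1/(n:ℝ))^l * (1-1/(n:ℝ))^(a-l) * 1 := by
        apply Finset.sum_congr rfl; intro l _; rw [hb]
    _ = 1 := ha

lemma q_nonneg {n : ℕ} (hn : 1 ≤ n) : (0:ℝ) ≤ 1 - 1/(n:ℝ) := by
  have h1 : (1:ℝ) ≤ (n:ℝ) := by exact_mod_cast hn
  have : 1/(n:ℝ) ≤ 1 := by rw [div_le_one (by linarith)]; linarith
  linarith

lemma Delta_eq_T (n r : ℕ) (hr : r ≤ n) : Delta n r = Tsum n r (n-r) w0 := by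
  have hnr : r + (n - r) = n := by omega
  unfold Delta Tsum
  have key : ∀ l, 1 ≤ l → l ≤ r →
      (∑ j ∈ range (l+1), ((l : ℝ) - j) * (r.choose l) * ((n - r).choose j) *
        (1 / n) ^ (l + j) * (1 - 1 / n) ^ (n - l - j))
      = ∑ j ∈ range (n-r+1), w0 l j * (r.choose l : ℝ) * ((n-r).choose j : ℝ) *
          (1/(n:ℝ))^(l+j) * (1 - 1/(n:ℝ))^(r+(n-r)-l-j) := by
    intro l hl1 hlr
    have e1 : ∀ j, w0 l j * (r.choose l : ℝ) * ((n-r).choose j : ℝ) *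
          (1/(n:ℝ))^(l+j) * (1 - 1/(n:ℝ))^(r+(n-r)-l-j)
        = w0 l j * (r.choose l : ℝ) * ((n-r).choose j : ℝ) *
          (1/(n:ℝ))^(l+j) * (1 - 1/(n:ℝ))^(n-l-j) := by
      intro j; rw [hnr]
    simp only [e1]
    have h1 : (∑ j ∈ range (l+1), ((l : ℝ) - j) * (r.choose l) * ((n - r).choose j) *
        (1 / n) ^ (l + j) * (1 - 1 / n) ^ (n - l - j))
        = ∑ j ∈ range (l+1), w0 l j * (r.choose l : ℝ) * ((n-r).choose j : ℝ) *
          (1/(n:ℝ))^(l+j) * (1 - 1/(n:ℝ))^(n-l-j) := by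
      apply Finset.sum_congr rfl; intro j hj
      simp only [mem_range] at hj
      have : w0 l j = (l:ℝ) - j := by
        unfold w0
        apply max_eq_left
        have : (j:ℝ) ≤ (l:ℝ) := by exact_mod_cast Nat.lt_succ_iff.mp hj
        linarith
      rw [this]
    rw [h1]
    -- both sides equal the sum over range (n+1)
    have big : ∀ (s : Finset ℕ), s ⊆ range (n+1) →
        (∀ j ∈ range (n+1), j ∉ s → w0 l j * (r.choose l : ℝ) * ((n-r).choose j : ℝ) *
          (1/(n:ℝ))^(l+j) * (1 - 1/(n:ℝ))^(n-l-j) = 0) →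
        (∑ j ∈ s, w0 l j * (r.choose l : ℝ) * ((n-r).choose j : ℝ) *
          (1/(n:ℝ))^(l+j) * (1 - 1/(n:ℝ))^(n-l-j))
        = ∑ j ∈ range (n+1), w0 l j * (r.choose l : ℝ) * ((n-r).choose j : ℝ) *
          (1/(n:ℝ))^(l+j) * (1 - 1/(n:ℝ))^(n-l-j) := by
      intro s hs hz
      exact (Finset.sum_subset hs hz)
    rw [big (range (l+1)) (by apply Finset.range_subset_range.mpr; omega)
        (by
          intro j _ hj
          simp only [mem_range, Nat.lt_succ_iff, not_le] at hj
          have : w0 l j = 0 := by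
            unfold w0
            apply max_eq_right
            have : (l:ℝ) < (j:ℝ) := by exact_mod_cast hj
            linarith
          rw [this]; ring),
      big (range (n-r+1)) (by apply Finset.range_subset_range.mpr; omega)
        (by
          intro j _ hj
          simp only [mem_range, Nat.lt_succ_iff, not_le] at hj
          have : (n-r).choose j = 0 := Nat.choose_eq_zero_of_lt hj
          rw [this]
          push_cast
          ring)]
  have zrow : ∑ j ∈ range (n-r+1), w0 0 j * (r.choose 0 : ℝ) * ((n-r).choose j : ℝ) *
      (1/(n:ℝ))^(0+j) * (1 - 1/(n:ℝ))^(r+(n-r)-0-j) = 0 := by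
    apply Finset.sum_eq_zero; intro j _
    have : w0 0 j = 0 := by
      unfold w0
      apply max_eq_right
      simp
    rw [this]; ring
  calc (∑ l ∈ Icc 1 r, ∑ j ∈ range (l + 1), ((l : ℝ) - j) * (r.choose l) * ((n - r).choose j) *
      (1 / n) ^ (l + j) * (1 - 1 / n) ^ (n - l - j))
      = ∑ l ∈ Icc 1 r, ∑ j ∈ range (n-r+1), w0 l j * (r.choose l : ℝ) * ((n-r).choose j : ℝ) *
          (1/(n:ℝ))^(l+j) * (1 - 1/(n:ℝ))^(r+(n-r)-l-j) := by
        apply Finset.sum_congr rfl; intro l hl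
        simp only [mem_Icc] at hl
        exact key l hl.1 hl.2
    _ = ∑ l ∈ range (r+1), ∑ j ∈ range (n-r+1), w0 l j * (r.choose l : ℝ) * ((n-r).choose j : ℝ) *
          (1/(n:ℝ))^(l+j) * (1 - 1/(n:ℝ))^(r+(n-r)-l-j) := by
        apply Finset.sum_subset
        · intro l hl
          simp only [mem_Icc] at hl
          simp only [mem_range]
          omega
        · intro l hl hnl
          simp only [mem_range] at hl
          simp only [mem_Icc] at hnl
          have hl0 : l = 0 := by omega
          subst hl0
          exact zrow

lemma Tsum_add (n a b : ℕ) (w w' : ℕ → ℕ → ℝ) :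
    Tsum n a b (fun l j => w l j + w' l j) = Tsum n a b w + Tsum n a b w' := by
  unfold Tsum
  rw [← Finset.sum_add_distrib]
  apply Finset.sum_congr rfl; intro l _
  rw [← Finset.sum_add_distrib]
  apply Finset.sum_congr rfl; intro j _
  ring

lemma Delta_step (n m : ℕ) (hn : 1 ≤ n) (hm : m + 1 ≤ n) :
    Delta n (m+1) - Delta n m ≤ 2/(n:ℝ) := by
  have hb1 : n - m = (n - (m+1)) + 1 := by omega
  set b := n - (m+1) with hb
  have e1 : Delta n (m+1) = Tsum n (m+1) b w0 := Delta_eq_T n (m+1) hm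
  have e2 : Delta n m = Tsum n m (b+1) w0 := by
    rw [Delta_eq_T n m (by omega), hb1]
  rw [e1, e2, Tsum_succ_left, Tsum_succ_right]
  have hp : (0:ℝ) ≤ 1/(n:ℝ) := by positivity
  have key : Tsum n m b (fun l j => w0 (l+1) j) ≤ Tsum n m b (fun l j => w0 l (j+1)) + 2 := by
    have h1 : Tsum n m b (fun l j => w0 (l+1) j)
        ≤ Tsum n m b (fun l j => w0 l (j+1) + 2 * 1) := by
      apply Tsum_mono n m b hn
      intro l j
      unfold w0
      apply max_le
      · push_cast
        have : ((l:ℝ) - (j+1)) ≤ max ((l:ℝ) - (j+1)) 0 := le_max_left _ _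
        push_cast at this
        linarith
      · have : (0:ℝ) ≤ max ((l:ℝ) - ((j:ℕ)+1:ℕ)) 0 := le_max_right _ _
        push_cast at this ⊢
        linarith
    have hsmul : Tsum n m b (fun _ _ => 2 * 1) = 2 * Tsum n m b (fun _ _ => 1) := by
      unfold Tsum
      rw [Finset.mul_sum]
      apply Finset.sum_congr rfl; intro l _
      rw [Finset.mul_sum]
      apply Finset.sum_congr rfl; intro j _
      ring
    have h2 : Tsum n m b (fun l j => w0 l (j+1) + 2 * 1)
        = Tsum n m b (fun l j => w0 l (j+1)) + 2 * Tsum n m b (fun _ _ => 1) := by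
      rw [Tsum_add n m b (fun l j => w0 l (j+1)) (fun _ _ => 2 * 1), hsmul]
    rw [h2, Tsum_mass n m b hn] at h1
    linarith
  have goal2 : (1/(n:ℝ)) * Tsum n m b (fun l j => w0 (l+1) j)
      - (1/(n:ℝ)) * Tsum n m b (fun l j => w0 l (j+1)) ≤ 2/(n:ℝ) := by
    have h := mul_le_mul_of_nonneg_left key hp
    rw [mul_add] at h
    have hpos : (0:ℝ) < (n:ℝ) := by exact_mod_cast hn
    have h2 : (1/(n:ℝ)) * 2 = 2/(n:ℝ) := by field_simp
    linarith
  linarith [goal2]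

lemma Delta_term_nonneg (n k : ℕ) (hn : 1 ≤ n) {l j : ℕ} (hj : j ≤ l) :
    (0:ℝ) ≤ ((l : ℝ) - j) * (k.choose l) * ((n - k).choose j) *
      (1 / n) ^ (l + j) * (1 - 1 / n) ^ (n - l - j) := by
  have h1 : (0:ℝ) ≤ (l:ℝ) - j := by
    have : (j:ℝ) ≤ l := by exact_mod_cast hj
    linarith
  have hq := q_nonneg hn
  positivity

lemma Delta_lower (n j : ℕ) (hn : 1 ≤ n) (hj : 1 ≤ j) :
    (j:ℝ)/n * (1 - 1/(n:ℝ))^(n-1) ≤ Delta n j := by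
  have hq := q_nonneg hn
  set g : ℕ → ℝ := fun l => ∑ j' ∈ range (l+1), ((l:ℝ) - j') * (j.choose l) *
    ((n-j).choose j') * (1/(n:ℝ))^(l+j') * (1-1/(n:ℝ))^(n-l-j') with hg
  have hDelta : Delta n j = ∑ l ∈ Icc 1 j, g l := rfl
  have hgnn : ∀ l, 0 ≤ g l := by
    intro l
    apply Finset.sum_nonneg
    intro j' hj'
    simp only [mem_range] at hj'
    exact Delta_term_nonneg n j hn (Nat.lt_succ_iff.mp hj')
  have h1 : (j:ℝ)/n * (1 - 1/(n:ℝ))^(n-1) ≤ g 1 := by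
    have h0 : (j:ℝ)/n * (1 - 1/(n:ℝ))^(n-1)
        = (((1:ℕ):ℝ) - ((0:ℕ):ℝ)) * (j.choose 1) * ((n-j).choose 0) *
          (1/(n:ℝ))^(1+0) * (1-1/(n:ℝ))^(n-1-0) := by
      rw [Nat.choose_one_right, Nat.choose_zero_right, Nat.sub_zero]
      push_cast
      ring
    rw [hg, h0]
    apply Finset.single_le_sum (f := fun (j' : ℕ) => (((1:ℕ):ℝ) - (j':ℝ)) * (j.choose 1) *
      (((n-j).choose j' : ℕ):ℝ) * (1/(n:ℝ))^(1+j') * (1-1/(n:ℝ))^(n-1-j')) (fun i hi => ?_) (by simp)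
    simp only [mem_range] at hi
    exact Delta_term_nonneg n j hn (l := 1) (Nat.lt_succ_iff.mp hi)
  calc (j:ℝ)/n * (1 - 1/(n:ℝ))^(n-1) ≤ g 1 := h1
    _ ≤ ∑ l ∈ Icc 1 j, g l := by
      apply Finset.single_le_sum (fun l _ => hgnn l)
      simp [mem_Icc]; omega
    _ = Delta n j := hDelta.symm

lemma q_pow_ge (n : ℕ) (hn : 2 ≤ n) : Real.exp (-1) ≤ (1 - 1/(n:ℝ))^(n-1) := by
  have hn1 : (1:ℝ) ≤ (n:ℝ) - 1 := by
    have : (2:ℝ) ≤ (n:ℝ) := by exact_mod_cast hn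
    linarith
  have hnpos : (0:ℝ) < (n:ℝ) := by positivity
  have hq : 1 - 1/(n:ℝ) = ((n:ℝ)-1)/n := by field_simp
  -- (n/(n-1))^(n-1) ≤ e
  have key : ((n:ℝ)/((n:ℝ)-1))^(n-1) ≤ Real.exp 1 := by
    have h1 : (n:ℝ)/((n:ℝ)-1) = 1 + 1/((n:ℝ)-1) := by field_simp; ring
    have h2 : (1:ℝ) + 1/((n:ℝ)-1) ≤ Real.exp (1/((n:ℝ)-1)) := by
      have := Real.add_one_le_exp (1/((n:ℝ)-1))
      linarith
    have h3 : ((n:ℝ)/((n:ℝ)-1))^(n-1) ≤ Real.exp (1/((n:ℝ)-1)) ^ (n-1) := by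
      apply pow_le_pow_left₀ (by positivity) (by rw [h1]; exact h2)
    have h4 : Real.exp (1/((n:ℝ)-1)) ^ (n-1) = Real.exp (((n-1 : ℕ):ℝ) * (1/((n:ℝ)-1))) := by
      rw [← Real.exp_nat_mul]
    have h5 : ((n-1:ℕ):ℝ) * (1/((n:ℝ)-1)) = 1 := by
      have : ((n-1:ℕ):ℝ) = (n:ℝ)-1 := by
        push_cast [Nat.cast_sub (by omega : 1 ≤ n)]
        ring
      rw [this]
      field_simp
    rw [h4, h5] at h3
    exact h3
  have hqpos : (0:ℝ) < ((n:ℝ)-1)/n := by positivity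
  rw [hq, Real.exp_neg]
  have hxpos : (0:ℝ) < ((n:ℝ)/((n:ℝ)-1))^(n-1) := by positivity
  have h6 := inv_anti₀ hxpos key
  have h7 : (((n:ℝ)/((n:ℝ)-1))^(n-1))⁻¹ = (((n:ℝ)-1)/n)^(n-1) := by
    rw [← inv_pow]
    congr 1
    rw [inv_div]
  rw [h7] at h6
  exact h6

lemma Delta_pos (n j : ℕ) (hn : 2 ≤ n) (hj : 1 ≤ j) : 0 < Delta n j := by
  have h1 := Delta_lower n j (by omega) hj
  have h2 := q_pow_ge n hn
  have h3 : (0:ℝ) < (j:ℝ)/n := by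
    have : (0:ℝ) < (j:ℝ) := by exact_mod_cast hj
    have : (0:ℝ) < (n:ℝ) := by positivity
    positivity
  have h4 : (0:ℝ) < Real.exp (-1) := Real.exp_pos _
  nlinarith

lemma Delta_inv_le (n j : ℕ) (hn : 2 ≤ n) (hj : 1 ≤ j) :
    1 / Delta n j ≤ Real.exp 1 * n / j := by
  have h1 := Delta_lower n j (by omega) hj
  have h2 := q_pow_ge n hn
  have hjp : (0:ℝ) < (j:ℝ) := by exact_mod_cast hj
  have hnp : (0:ℝ) < (n:ℝ) := by positivity
  have hD := Delta_pos n j hn hj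
  have key : (j:ℝ)/(Real.exp 1 * n) ≤ Delta n j := by
    have h3 : (j:ℝ)/n * Real.exp (-1) ≤ (j:ℝ)/n * (1 - 1/(n:ℝ))^(n-1) := by
      apply mul_le_mul_of_nonneg_left h2 (by positivity)
    have h4 : (j:ℝ)/(Real.exp 1 * n) = (j:ℝ)/n * Real.exp (-1) := by
      rw [Real.exp_neg, div_mul_eq_div_div_swap]
      ring
    linarith
  rw [div_le_div_iff₀ hD (by positivity)]
  have h5 : (j:ℝ)/(Real.exp 1 * n) * (Real.exp 1 * n / j) = 1 := by
    field_simp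
  calc (1:ℝ) * (j:ℝ) = (j:ℝ)/(Real.exp 1 * n) * (Real.exp 1 * n) := by field_simp
    _ ≤ Delta n j * (Real.exp 1 * n) := by
      apply mul_le_mul_of_nonneg_right key (by positivity)
    _ = Real.exp 1 * n * Delta n j := by ring

lemma Delta_diff (n j k : ℕ) (hn : 2 ≤ n) (hjk : j ≤ k) (hk : k ≤ n) :
    Delta n k - Delta n j ≤ 2 * ((k:ℝ) - j) / n := by
  induction k, hjk using Nat.le_induction with
  | base => simp
  | succ m hjm ih =>
    have h1 := Delta_step n m (by omega) (by omega)
    have h2 := ih (by omega)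
    have hc : ((m+1:ℕ):ℝ) = (m:ℝ) + 1 := by push_cast; ring
    rw [hc]
    have hnp : (0:ℝ) < (n:ℝ) := by positivity
    have e1 : 2 * ((m:ℝ) + 1 - j) / n = 2 * ((m:ℝ) - j)/n + 2/n := by field_simp; ring
    rw [e1]
    linarith

-- sum of (k - j) over Icc (l+1) k
lemma sum_Icc_kj (l k : ℕ) (hlk : l < k) :
    ∑ j ∈ Icc (l+1) k, ((k:ℝ) - j) = ((k:ℝ)-l) * ((k:ℝ)-l-1) / 2 := by
  induction k, hlk using Nat.le_induction with
  | base =>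
    rw [Icc_self, Finset.sum_singleton]
    push_cast
    ring
  | succ m hlm ih =>
    rw [Finset.sum_Icc_succ_top (by omega)]
    have e : ∀ x ∈ Icc (l+1) m, ((m+1:ℕ):ℝ) - x = ((m:ℝ) - x) + 1 := by
      intro x _; push_cast; ring
    rw [Finset.sum_congr rfl e, Finset.sum_add_distrib, ih]
    have hcard : ∑ _x ∈ Icc (l+1) m, (1:ℝ) = (m:ℝ) - l := by
      rw [Finset.sum_const, Nat.card_Icc]
      have : m + 1 - (l+1) = m - l := by omega
      rw [this, nsmul_eq_mul]
      have : ((m - l:ℕ):ℝ) = (m:ℝ) - l := by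
        push_cast [Nat.cast_sub (by omega : l ≤ m)]
        ring
      rw [this]; ring
    rw [hcard]
    push_cast
    ring

lemma main_le (n k : ℕ) (hn : 2 ≤ n) (hk1 : 1 ≤ k) (hk : k ≤ n) :
    ∑ l ∈ range k, pOneMax n k l * ((k:ℝ) - l) ≤ Delta n k := by
  classical
  have hq := q_nonneg (n := n) (by omega)
  set g : (Σ _ : ℕ, ℕ) → ℝ := fun s => ((s.1:ℝ) - s.2) * (k.choose s.1) * ((n-k).choose s.2) *
    (1/(n:ℝ))^(s.1+s.2) * (1-1/(n:ℝ))^(n - s.1 - s.2) with hgdef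
  set A : Finset (Σ _ : ℕ, ℕ) := (range k).sigma (fun l => range (min l (n-k) + 1)) with hA
  set B : Finset (Σ _ : ℕ, ℕ) := (Icc 1 k).sigma (fun l' => range (l'+1)) with hB
  set ι : (Σ _ : ℕ, ℕ) → (Σ _ : ℕ, ℕ) := fun s => ⟨k - s.1 + s.2, s.2⟩ with hι
  have hginn : ∀ s ∈ A, pOneMax n k s.1 * ((k:ℝ) - s.1) = pOneMax n k s.1 * ((k:ℝ) - s.1) := fun _ _ => rfl
  -- Step 1 : LHS = ∑ over A of g ∘ ι
  have step1 : ∑ l ∈ range k, pOneMax n k l * ((k:ℝ) - l) = ∑ s ∈ A, g (ι s) := by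
    rw [hA, Finset.sum_sigma]
    apply Finset.sum_congr rfl
    intro l hl
    simp only [mem_range] at hl
    rw [pOneMax, if_pos (by omega : l ≤ k), Finset.sum_mul]
    apply Finset.sum_congr rfl
    intro i hi
    simp only [mem_range] at hi
    have hil : i ≤ min l (n-k) := by omega
    have hile : i ≤ l := le_trans hil (min_le_left _ _)
    have hlk : l ≤ k := by omega
    simp only [hgdef, hι]
    have c1 : ((k - l + i : ℕ):ℝ) - (i:ℝ) = (k:ℝ) - l := by
      push_cast [Nat.cast_sub hlk]
      ring
    have e1 : (k - l + i) + i = k - l + 2*i := by omega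
    have e2 : n - (k - l + i) - i = n - (k - l) - 2*i := by omega
    rw [c1, e1, e2]
    ring
  rw [step1]
  -- Step 2 : ∑ over A = ∑ over image
  have hinj : ∀ x ∈ A, ∀ y ∈ A, ι x = ι y → x = y := by
    intro x hx y hy hxy
    simp only [hA, Finset.mem_sigma, mem_range] at hx hy
    simp only [hι, Sigma.mk.inj_iff] at hxy
    obtain ⟨h1, h2⟩ := hxy
    have h2' : x.2 = y.2 := by
      exact eq_of_heq h2
    have h1' : x.1 = y.1 := by omega
    cases x; cases y
    simp_all
  rw [← Finset.sum_image hinj]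
  -- Step 3 : image ⊆ B, g nonneg on B
  have himg : A.image ι ⊆ B := by
    intro s hs
    simp only [Finset.mem_image] at hs
    obtain ⟨x, hx, rfl⟩ := hs
    simp only [hA, Finset.mem_sigma, mem_range] at hx
    simp only [hB, hι, Finset.mem_sigma, mem_Icc, mem_range]
    have : x.2 ≤ min x.1 (n-k) := by omega
    have := min_le_left x.1 (n-k)
    constructor <;> omega
  have hgnn : ∀ s ∈ B, 0 ≤ g s := by
    intro s hs
    simp only [hB, Finset.mem_sigma, mem_Icc, mem_range] at hs
    have : (s.2:ℝ) ≤ (s.1:ℝ) := by exact_mod_cast (by omega : s.2 ≤ s.1)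
    simp only [hgdef]
    have h1 : (0:ℝ) ≤ (s.1:ℝ) - s.2 := by linarith
    positivity
  calc ∑ s ∈ A.image ι, g s ≤ ∑ s ∈ B, g s := by
        apply Finset.sum_le_sum_of_subset_of_nonneg himg
        intro s hs _
        exact hgnn s hs
    _ = Delta n k := by
        rw [hB, Finset.sum_sigma]
        rfl

lemma choose_split (k a i : ℕ) (ha : a ≤ k) :
    (k.choose (a + i) : ℝ) ≤ (k.choose a : ℝ) * ((k - a).choose i : ℝ) := by
  rcases le_or_gt (a + i) k with h | h
  · have := Nat.choose_mul (n := k) (k := a + i) (s := a) (Nat.le_add_right a i)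
    have e : (a + i) - a = i := by omega
    rw [e] at this
    have hpos : 1 ≤ (a+i).choose a := Nat.choose_pos (Nat.le_add_right a i)
    have : k.choose (a+i) ≤ k.choose a * (k-a).choose i := by
      calc k.choose (a+i) ≤ k.choose (a+i) * (a+i).choose a := Nat.le_mul_of_pos_right _ hpos
        _ = k.choose a * (k-a).choose i := this
    exact_mod_cast this
  · rw [Nat.choose_eq_zero_of_lt h]
    push_cast
    positivity

lemma pOneMax_le (n k l : ℕ) (hn : 2 ≤ n) (hlk : l < k) (hk2 : 2*k ≤ n) :
    pOneMax n k l ≤ Real.exp (1/2) * (k.choose (k-l) : ℝ) * (1/(n:ℝ))^(k-l) := by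
  have hq0 := q_nonneg (n := n) (by omega)
  have hq1 : (1 - 1/(n:ℝ)) ≤ 1 := by
    have : (0:ℝ) ≤ 1/(n:ℝ) := by positivity
    linarith
  have hnp : (0:ℝ) < (n:ℝ) := by positivity
  rw [pOneMax, if_pos (by omega : l ≤ k)]
  have key : ∀ i ∈ range (min l (n-k) + 1),
      (k.choose (k - l + i) : ℝ) * ((n - k).choose i) *
        (1 / n : ℝ) ^ (k - l + 2 * i) * (1 - 1 / n) ^ (n - (k - l) - 2 * i)
      ≤ (k.choose (k-l) : ℝ) * (1/(n:ℝ))^(k-l) * ((1/2)^i / (Nat.factorial i)) := by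
    intro i hi
    have h1 : (1 - 1/(n:ℝ)) ^ (n - (k - l) - 2 * i) ≤ 1 := pow_le_one₀ hq0 hq1
    have h2 : (k.choose (k - l + i) : ℝ) ≤ (k.choose (k-l) : ℝ) * (l.choose i : ℝ) := by
      have := choose_split k (k-l) i (by omega)
      have e : k - (k - l) = l := by omega
      rw [e] at this
      exact this
    have h3 : (1/(n:ℝ))^(k - l + 2*i) = (1/(n:ℝ))^(k-l) * ((1/(n:ℝ))^2)^i := by
      rw [← pow_mul, ← pow_add]
    have h4 : (l.choose i : ℝ) * ((n-k).choose i : ℝ) * ((1/(n:ℝ))^2)^i ≤ (1/2)^i / (Nat.factorial i) := by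
      have c1 : (l.choose i : ℝ) ≤ (l:ℝ)^i / (Nat.factorial i) := Nat.choose_le_pow_div i l
      have c2 : ((n-k).choose i : ℝ) ≤ ((n-k:ℕ):ℝ)^i := by
        exact_mod_cast Nat.choose_le_pow (n-k) i
      have c3 : (0:ℝ) ≤ (l.choose i : ℝ) := by positivity
      have c4 : (0:ℝ) ≤ ((n-k:ℕ):ℝ)^i := by positivity
      have hfac : (0:ℝ) < (Nat.factorial i : ℝ) := by exact_mod_cast Nat.factorial_pos i
      calc (l.choose i : ℝ) * ((n-k).choose i : ℝ) * ((1/(n:ℝ))^2)^i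
          ≤ ((l:ℝ)^i / (Nat.factorial i)) * ((n-k:ℕ):ℝ)^i * ((1/(n:ℝ))^2)^i := by
            apply mul_le_mul_of_nonneg_right _ (by positivity)
            apply mul_le_mul c1 c2 (by positivity) (by positivity)
        _ = ((l:ℝ) * ((n-k:ℕ):ℝ) * (1/(n:ℝ))^2)^i / (Nat.factorial i) := by
            rw [mul_pow, mul_pow]
            ring
        _ ≤ (1/2:ℝ)^i / (Nat.factorial i) := by
            have hxle : (l:ℝ) * ((n-k:ℕ):ℝ) * (1/(n:ℝ))^2 ≤ 1/2 := by
              have A : (2*l*(n-k)) ≤ n*n :=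
                Nat.mul_le_mul (by omega : 2*l ≤ n) (by omega : n-k ≤ n)
              have A' : ((2*l*(n-k):ℕ):ℝ) ≤ ((n*n:ℕ):ℝ) := by exact_mod_cast A
              push_cast at A'
              have e : (l:ℝ) * ((n-k:ℕ):ℝ) * (1/(n:ℝ))^2 = ((l:ℝ) * ((n-k:ℕ):ℝ)) / (n:ℝ)^2 := by
                field_simp
              rw [e, div_le_div_iff₀ (by positivity) (by norm_num)]
              nlinarith [A']
            have hx0 : (0:ℝ) ≤ (l:ℝ) * ((n-k:ℕ):ℝ) * (1/(n:ℝ))^2 := by positivity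
            exact (div_le_div_iff_of_pos_right hfac).mpr (pow_le_pow_left₀ hx0 hxle i)
    calc (k.choose (k - l + i) : ℝ) * ((n - k).choose i) *
        (1 / n : ℝ) ^ (k - l + 2 * i) * (1 - 1 / n) ^ (n - (k - l) - 2 * i)
        ≤ (k.choose (k - l + i) : ℝ) * ((n - k).choose i) * (1 / n : ℝ) ^ (k - l + 2 * i) := by
          have hb : (0:ℝ) ≤ (k.choose (k - l + i) : ℝ) * ((n - k).choose i) * (1 / n : ℝ) ^ (k - l + 2 * i) := by positivity
          calc (k.choose (k - l + i) : ℝ) * ((n - k).choose i) * (1 / n : ℝ) ^ (k - l + 2 * i) * (1 - 1 / n) ^ (n - (k - l) - 2 * i)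
              ≤ (k.choose (k - l + i) : ℝ) * ((n - k).choose i) * (1 / n : ℝ) ^ (k - l + 2 * i) * 1 :=
                mul_le_mul_of_nonneg_left h1 hb
            _ = (k.choose (k - l + i) : ℝ) * ((n - k).choose i) * (1 / n : ℝ) ^ (k - l + 2 * i) := by ring
      _ = (k.choose (k - l + i) : ℝ) * ((n - k).choose i) * ((1/(n:ℝ))^(k-l) * ((1/(n:ℝ))^2)^i) := by
          rw [h3]
      _ ≤ ((k.choose (k-l) : ℝ) * (l.choose i : ℝ)) * ((n - k).choose i) * ((1/(n:ℝ))^(k-l) * ((1/(n:ℝ))^2)^i) := by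
          apply mul_le_mul_of_nonneg_right _ (by positivity)
          apply mul_le_mul_of_nonneg_right h2 (by positivity)
      _ = (k.choose (k-l) : ℝ) * (1/(n:ℝ))^(k-l) * ((l.choose i : ℝ) * ((n-k).choose i : ℝ) * ((1/(n:ℝ))^2)^i) := by
          ring
      _ ≤ (k.choose (k-l) : ℝ) * (1/(n:ℝ))^(k-l) * ((1/2)^i / (Nat.factorial i)) := by
          apply mul_le_mul_of_nonneg_left h4 (by positivity)
  calc ∑ i ∈ range (min l (n-k) + 1), (k.choose (k - l + i) : ℝ) * ((n - k).choose i) *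
        (1 / n : ℝ) ^ (k - l + 2 * i) * (1 - 1 / n) ^ (n - (k - l) - 2 * i)
      ≤ ∑ i ∈ range (min l (n-k) + 1), (k.choose (k-l) : ℝ) * (1/(n:ℝ))^(k-l) * ((1/2)^i / (Nat.factorial i)) := by
        exact Finset.sum_le_sum key
    _ = (k.choose (k-l) : ℝ) * (1/(n:ℝ))^(k-l) * (∑ i ∈ range (min l (n-k) + 1), ((1/2:ℝ))^i / (Nat.factorial i)) := by
        rw [Finset.mul_sum]
    _ ≤ (k.choose (k-l) : ℝ) * (1/(n:ℝ))^(k-l) * Real.exp (1/2) := by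
        apply mul_le_mul_of_nonneg_left _ (by positivity)
        exact Real.sum_le_exp_of_nonneg (by norm_num) _
    _ = Real.exp (1/2) * (k.choose (k-l) : ℝ) * (1/(n:ℝ))^(k-l) := by ring

lemma nat_id (k d : ℕ) (h2 : 2 ≤ d) (hdk : d ≤ k) :
    d*(d-1)*(k.choose d) = k * ((k-1).choose (d-2)) * (k-d+1) := by
  have e1 : k * ((k-1).choose (d-1)) = (k.choose d) * d := by
    have h := Nat.add_one_mul_choose_eq (k-1) (d-1)
    have ek : k-1+1 = k := by omega
    have ed : d-1+1 = d := by omega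
    rw [ek, ed] at h
    exact h
  have e2 : ((k-1).choose (d-1)) * (d-1) = ((k-1).choose (d-2)) * (k-d+1) := by
    have h := Nat.choose_succ_right_eq (k-1) (d-2)
    have ed : d-2+1 = d-1 := by omega
    have ek : (k-1) - (d-2) = k-d+1 := by omega
    rw [ed, ek] at h
    exact h
  calc d*(d-1)*(k.choose d) = (k.choose d * d) * (d-1) := by ring
    _ = (k * (k-1).choose (d-1)) * (d-1) := by rw [e1]
    _ = k * ((k-1).choose (d-1) * (d-1)) := by ring
    _ = k * ((k-1).choose (d-2) * (k-d+1)) := by rw [e2]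
    _ = k * (k-1).choose (d-2) * (k-d+1) := by ring

lemma term_id (n k l : ℕ) (hl : l + 2 ≤ k) :
    (k.choose (k-l) : ℝ) * (1/(n:ℝ))^(k-l) * (((k:ℝ)-l) * ((k:ℝ)-l-1) / ((l:ℝ)+1))
    = (k:ℝ) * (((k-1).choose (k-l-2)) : ℝ) * (1/(n:ℝ))^(k-l) := by
  set d := k - l with hd
  have hid := nat_id k d (by omega) (by omega)
  have hidR : ((d:ℕ):ℝ)*(((d-1:ℕ)):ℝ)*(k.choose d : ℝ)
      = (k:ℝ)*(((k-1).choose (d-2)):ℝ)*(((k-d+1:ℕ)):ℝ) := by exact_mod_cast hid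
  have c1 : ((d:ℕ):ℝ) = (k:ℝ) - l := by
    rw [hd]; push_cast [Nat.cast_sub (by omega : l ≤ k)]; ring
  have c2 : (((d-1:ℕ)):ℝ) = (k:ℝ)-l-1 := by
    rw [hd]
    have : k - l - 1 = k - (l+1) := by omega
    rw [this]; push_cast [Nat.cast_sub (by omega : l+1 ≤ k)]; ring
  have c3 : (((k-d+1:ℕ)):ℝ) = (l:ℝ)+1 := by
    have : k - d = l := by omega
    rw [this]; push_cast; ring
  rw [c1, c2, c3] at hidR
  have hlp : ((l:ℝ)+1) ≠ 0 := by positivity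
  apply mul_right_cancel₀ hlp
  have e : (k.choose d:ℝ) * (1/(n:ℝ))^d * (((k:ℝ)-l)*((k:ℝ)-l-1)/((l:ℝ)+1)) * ((l:ℝ)+1)
      = (k.choose d:ℝ) * (1/(n:ℝ))^d * (((k:ℝ)-l)*((k:ℝ)-l-1)) := by
    rw [mul_assoc, div_mul_eq_mul_div, mul_div_assoc, div_self hlp, mul_one]
  rw [e]
  linear_combination (1/(n:ℝ))^d * hidR

lemma comb_sum (n k : ℕ) (hk1 : 1 ≤ k) :
    ∑ l ∈ range k, (k.choose (k-l) : ℝ) * (1/(n:ℝ))^(k-l) * (((k:ℝ)-l) * ((k:ℝ)-l-1) / ((l:ℝ)+1))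
    ≤ (k:ℝ) * (1/(n:ℝ))^2 * (1+1/(n:ℝ))^(k-1) := by
  have hp : (0:ℝ) ≤ 1/(n:ℝ) := by positivity
  obtain ⟨m, rfl⟩ : ∃ m, k = m+1 := ⟨k-1, by omega⟩
  rw [Finset.sum_range_succ]
  have hlast : ((m+1).choose ((m+1)-m) : ℝ) * (1/(n:ℝ))^((m+1)-m) *
      ((((m+1:ℕ)):ℝ)-m) * ((((m+1:ℕ)):ℝ)-m-1) / ((m:ℝ)+1) = 0 := by
    have e : (((m+1:ℕ)):ℝ)-(m:ℝ)-1 = 0 := by push_cast; ring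
    rw [e]; ring
  have hzero : ((m+1).choose ((m+1)-m) : ℝ) * (1/(n:ℝ))^((m+1)-m) *
      (((((m+1:ℕ)):ℝ)-m) * ((((m+1:ℕ)):ℝ)-m-1) / ((m:ℝ)+1)) = 0 := by
    have e : (((m+1:ℕ)):ℝ)-(m:ℝ)-1 = 0 := by push_cast; ring
    rw [e]; ring
  rw [hzero, add_zero]
  have step1 : ∑ l ∈ range m, ((m+1).choose ((m+1)-l) : ℝ) * (1/(n:ℝ))^((m+1)-l) *
        (((((m+1:ℕ)):ℝ)-l) * ((((m+1:ℕ)):ℝ)-l-1) / ((l:ℝ)+1))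
      = ∑ l ∈ range m, (((m+1:ℕ)):ℝ) * (((m+1-1).choose ((m+1)-l-2)) : ℝ) * (1/(n:ℝ))^((m+1)-l) := by
    apply Finset.sum_congr rfl
    intro l hl
    simp only [mem_range] at hl
    exact term_id n (m+1) l (by omega)
  rw [step1]
  have step2 : ∑ l ∈ range m, (((m+1:ℕ)):ℝ) * (((m+1-1).choose ((m+1)-l-2)) : ℝ) * (1/(n:ℝ))^((m+1)-l)
      = ∑ i ∈ range m, (((m+1:ℕ)):ℝ) * ((m.choose i) : ℝ) * (1/(n:ℝ))^(i+2) := by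
    rw [← Finset.sum_range_reflect (fun i => (((m+1:ℕ)):ℝ) * ((m.choose i) : ℝ) * (1/(n:ℝ))^(i+2)) m]
    apply Finset.sum_congr rfl
    intro j hj
    simp only [mem_range] at hj
    have e1 : m+1-1 = m := by omega
    have e2 : (m+1)-j-2 = m-1-j := by omega
    have e3 : (m+1)-j = (m-1-j)+2 := by omega
    rw [e1, e2, e3]
  rw [step2]
  have step3 : ∑ i ∈ range m, (((m+1:ℕ)):ℝ) * ((m.choose i) : ℝ) * (1/(n:ℝ))^(i+2)
      = (((m+1:ℕ)):ℝ) * (1/(n:ℝ))^2 * ∑ i ∈ range m, ((m.choose i) : ℝ) * (1/(n:ℝ))^i := by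
    rw [Finset.mul_sum]
    apply Finset.sum_congr rfl
    intro i _
    rw [pow_add]
    ring
  rw [step3]
  have step4 : ∑ i ∈ range m, ((m.choose i) : ℝ) * (1/(n:ℝ))^i ≤ (1+1/(n:ℝ))^m := by
    have hbin : (1/(n:ℝ) + 1)^m = ∑ i ∈ range (m+1), (1/(n:ℝ))^i * 1^(m-i) * (m.choose i) :=
      add_pow (1/(n:ℝ)) 1 m
    have hsub : ∑ i ∈ range m, ((m.choose i) : ℝ) * (1/(n:ℝ))^i
        ≤ ∑ i ∈ range (m+1), ((m.choose i) : ℝ) * (1/(n:ℝ))^i := by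
      apply Finset.sum_le_sum_of_subset_of_nonneg (by apply Finset.range_subset_range.mpr; omega)
      intro i _ _
      positivity
    have heq : ∑ i ∈ range (m+1), ((m.choose i) : ℝ) * (1/(n:ℝ))^i = (1+1/(n:ℝ))^m := by
      rw [show (1+1/(n:ℝ)) = (1/(n:ℝ) + 1) by ring, hbin]
      apply Finset.sum_congr rfl
      intro i _
      rw [one_pow]
      ring
    linarith
  have hfac : (0:ℝ) ≤ (((m+1:ℕ)):ℝ) * (1/(n:ℝ))^2 := by positivity
  have := mul_le_mul_of_nonneg_left step4 hfac
  have efin : (m+1) - 1 = m := by omega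
  rw [efin]
  calc (((m+1:ℕ)):ℝ) * (1/(n:ℝ))^2 * ∑ i ∈ range m, ((m.choose i) : ℝ) * (1/(n:ℝ))^i
      ≤ (((m+1:ℕ)):ℝ) * (1/(n:ℝ))^2 * (1+1/(n:ℝ))^m := this
    _ = ((m+1:ℕ):ℝ) * (1/(n:ℝ))^2 * (1+1/(n:ℝ))^m := rfl

lemma inv_bound {A B c d : ℝ} (hA : 0 < A) (hB : 0 < B) (hc : 0 ≤ c) (hd : 0 ≤ d)
    (h1 : B - A ≤ c) (h2 : 1/A ≤ d) :
    1/A ≤ 1/B + c * d / B := by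
  have h3 : 1/A - 1/B = (B - A) * (1/A) * (1/B) := by
    field_simp
  have hA' : 0 ≤ 1/A := by positivity
  have hB' : 0 ≤ 1/B := by positivity
  rcases le_or_gt (B - A) 0 with h | h
  · have : (B - A) * (1/A) * (1/B) ≤ 0 := by
      apply mul_nonpos_of_nonpos_of_nonneg _ hB'
      exact mul_nonpos_of_nonpos_of_nonneg h hA'
    have hcd : 0 ≤ c * d / B := by positivity
    linarith
  · have step : (B - A) * (1/A) ≤ c * d := by
      apply mul_le_mul h1 h2 hA' hc
    have : (B - A) * (1/A) * (1/B) ≤ c * d * (1/B) :=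
      mul_le_mul_of_nonneg_right step hB'
    have e : c * d * (1/B) = c * d / B := by ring
    linarith

lemma pOneMax_nonneg (n k j : ℕ) (hn : 1 ≤ n) : 0 ≤ pOneMax n k j := by
  unfold pOneMax
  split
  · apply Finset.sum_nonneg
    intro i _
    have hq := q_nonneg (n := n) hn
    positivity
  · exact le_refl 0
lemma one_add_pow_le (n k : ℕ) (hn : 2 ≤ n) (hk2 : 2*k ≤ n) :
    (1 + 1/(n:ℝ))^(k-1) ≤ Real.exp (1/2) := by
  have hnp : (0:ℝ) < (n:ℝ) := by positivity
  have h1 : (1:ℝ) + 1/(n:ℝ) ≤ Real.exp (1/(n:ℝ)) := by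
    have := Real.add_one_le_exp (1/(n:ℝ))
    linarith
  have h2 : ((1:ℝ) + 1/(n:ℝ))^(k-1) ≤ Real.exp (1/(n:ℝ)) ^ (k-1) :=
    pow_le_pow_left₀ (by positivity) h1 (k-1)
  have h3 : Real.exp (1/(n:ℝ)) ^ (k-1) = Real.exp (((k-1:ℕ):ℝ)/(n:ℝ)) := by
    rw [← Real.exp_nat_mul]
    congr 1
    ring
  have h4 : ((k-1:ℕ):ℝ)/(n:ℝ) ≤ 1/2 := by
    rw [div_le_iff₀ hnp]
    have : ((k-1:ℕ):ℝ) * 2 ≤ (n:ℝ) := by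
      have hnat : (k-1) * 2 ≤ n := by omega
      exact_mod_cast hnat
    linarith
  calc ((1:ℝ) + 1/(n:ℝ))^(k-1) ≤ Real.exp (((k-1:ℕ):ℝ)/(n:ℝ)) := by rw [← h3]; exact h2
    _ ≤ Real.exp (1/2) := Real.exp_le_exp.mpr h4

lemma exp_half_le_two : Real.exp (1/2 : ℝ) ≤ 2 := by
  nlinarith [Real.exp_one_lt_d9, Real.exp_pos (1/2 : ℝ),
    Real.exp_add (1/2 : ℝ) (1/2 : ℝ), sq_nonneg (Real.exp (1/2:ℝ) - 2)]

end EtaAux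

/-- For `k ∈ {1, …, ⌊n/2⌋}` the error term
`η(k) = ∑_{ℓ=0}^{k−1} p(k,ℓ) ∑_{j=ℓ+1}^{k} 1/Δ(j)` (the drift of the potential
`g(k) = ∑_{j=1}^{k} 1/Δ(j)`) of the (1+1) EA on OneMax satisfies
`η(k) ≤ 1 + 2e^{5/2}/(n−1)`. -/
theorem eta_upper_bound (n k : ℕ) (hn : 2 ≤ n) (hk1 : 1 ≤ k) (hkn : k ≤ n / 2) :
    (∑ l ∈ range k, pOneMax n k l * ∑ j ∈ Icc (l + 1) k, 1 / Delta n j)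
      ≤ 1 + 2 * Real.exp 1 ^ ((5 : ℝ) / 2) / ((n : ℝ) - 1) := by
  classical
  have hk2 : 2*k ≤ n := by omega
  have hkn' : k ≤ n := by omega
  have hnp : (0:ℝ) < (n:ℝ) := by positivity
  have hkp : (0:ℝ) < (k:ℝ) := by exact_mod_cast hk1
  have hDk : 0 < Delta n k := EtaAux.Delta_pos n k hn hk1
  have he : (0:ℝ) < Real.exp 1 := Real.exp_pos 1
  have hXnn : ∀ l ∈ range k, (0:ℝ) ≤ ((k:ℝ)-l) * ((k:ℝ)-l-1) / ((l:ℝ)+1) := by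
    intro l hl
    simp only [mem_range] at hl
    have h1 : (l:ℝ) + 1 ≤ (k:ℝ) := by exact_mod_cast hl
    have h2 : (0:ℝ) ≤ (k:ℝ) - l - 1 := by linarith
    have h3 : (0:ℝ) ≤ (k:ℝ) - l := by linarith
    positivity
  have hPnn : ∀ l, 0 ≤ pOneMax n k l := fun l => EtaAux.pOneMax_nonneg n k l (by omega)
  -- per-l bound for the inner sum
  have hSl : ∀ l ∈ range k,
      (∑ j ∈ Icc (l+1) k, 1 / Delta n j)
      ≤ (((k:ℝ)-l) + Real.exp 1 * (((k:ℝ)-l) * ((k:ℝ)-l-1) / ((l:ℝ)+1))) / Delta n k := by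
    intro l hl
    simp only [mem_range] at hl
    have hperj : ∀ j ∈ Icc (l+1) k, 1/Delta n j
        ≤ 1/Delta n k + (2*Real.exp 1/((l:ℝ)+1)) * ((k:ℝ)-j) / Delta n k := by
      intro j hj
      simp only [mem_Icc] at hj
      have hj1 : 1 ≤ j := by omega
      have hjk : j ≤ k := hj.2
      have hjR : (0:ℝ) < (j:ℝ) := by exact_mod_cast hj1
      have hkjR : (0:ℝ) ≤ (k:ℝ) - j := by
        have : (j:ℝ) ≤ (k:ℝ) := by exact_mod_cast hjk
        linarith
      have hDj : 0 < Delta n j := EtaAux.Delta_pos n j hn hj1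
      have h1 : Delta n k - Delta n j ≤ 2*((k:ℝ)-j)/n := EtaAux.Delta_diff n j k hn hjk hkn'
      have h2 : 1/Delta n j ≤ Real.exp 1 * n / j := EtaAux.Delta_inv_le n j hn hj1
      have key := EtaAux.inv_bound hDj hDk (by positivity) (by positivity) h1 h2
      have hcd : (2*((k:ℝ)-j)/n) * (Real.exp 1 * (n:ℝ) / j) = (2*Real.exp 1/(j:ℝ)) * ((k:ℝ)-j) := by
        field_simp
      rw [hcd] at key
      have hmono : (2*Real.exp 1/(j:ℝ)) * ((k:ℝ)-j) ≤ (2*Real.exp 1/((l:ℝ)+1)) * ((k:ℝ)-j) := by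
        apply mul_le_mul_of_nonneg_right _ hkjR
        apply div_le_div_of_nonneg_left (by positivity) (by positivity)
        have : (l:ℝ) + 1 ≤ (j:ℝ) := by exact_mod_cast hj.1
        linarith
      have hmono2 : (2*Real.exp 1/(j:ℝ)) * ((k:ℝ)-j) / Delta n k
          ≤ (2*Real.exp 1/((l:ℝ)+1)) * ((k:ℝ)-j) / Delta n k :=
        (div_le_div_iff_of_pos_right hDk).mpr hmono
      linarith
    calc ∑ j ∈ Icc (l+1) k, 1/Delta n j
        ≤ ∑ j ∈ Icc (l+1) k, (1/Delta n k + (2*Real.exp 1/((l:ℝ)+1)) * ((k:ℝ)-j) / Delta n k) :=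
          Finset.sum_le_sum hperj
      _ = ((Icc (l+1) k).card : ℝ) * (1/Delta n k)
          + (2*Real.exp 1/((l:ℝ)+1)/Delta n k) * ∑ j ∈ Icc (l+1) k, ((k:ℝ)-j) := by
          rw [Finset.sum_add_distrib, Finset.sum_const, nsmul_eq_mul, Finset.mul_sum]
          congr 1
          apply Finset.sum_congr rfl; intro j _; ring
      _ = ((k:ℝ)-l) * (1/Delta n k)
          + (2*Real.exp 1/((l:ℝ)+1)/Delta n k) * (((k:ℝ)-l)*((k:ℝ)-l-1)/2) := by
          rw [EtaAux.sum_Icc_kj l k hl, Nat.card_Icc]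
          congr 2
          have e1 : k + 1 - (l+1) = k - l := by omega
          rw [e1]
          push_cast [Nat.cast_sub (le_of_lt hl)]
          ring
      _ = (((k:ℝ)-l) + Real.exp 1 * (((k:ℝ)-l) * ((k:ℝ)-l-1) / ((l:ℝ)+1))) / Delta n k := by
          ring
  -- main chain
  have hsum : ∑ l ∈ range k, pOneMax n k l * (((k:ℝ)-l) * ((k:ℝ)-l-1) / ((l:ℝ)+1))
      ≤ Real.exp (1/2) * ((k:ℝ) * (1/(n:ℝ))^2 * (1+1/(n:ℝ))^(k-1)) := by
    calc ∑ l ∈ range k, pOneMax n k l * (((k:ℝ)-l) * ((k:ℝ)-l-1) / ((l:ℝ)+1))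
        ≤ ∑ l ∈ range k, (Real.exp (1/2) * (k.choose (k-l) : ℝ) * (1/(n:ℝ))^(k-l)) *
            (((k:ℝ)-l) * ((k:ℝ)-l-1) / ((l:ℝ)+1)) := by
          apply Finset.sum_le_sum
          intro l hl
          have hlk : l < k := by simpa using hl
          exact mul_le_mul_of_nonneg_right (EtaAux.pOneMax_le n k l hn hlk hk2) (hXnn l hl)
      _ = Real.exp (1/2) * ∑ l ∈ range k, (k.choose (k-l) : ℝ) * (1/(n:ℝ))^(k-l) *
            (((k:ℝ)-l) * ((k:ℝ)-l-1) / ((l:ℝ)+1)) := by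
          rw [Finset.mul_sum]
          apply Finset.sum_congr rfl; intro l _; ring
      _ ≤ Real.exp (1/2) * ((k:ℝ) * (1/(n:ℝ))^2 * (1+1/(n:ℝ))^(k-1)) := by
          apply mul_le_mul_of_nonneg_left _ (by positivity)
          exact EtaAux.comb_sum n k hk1
  have hS0 : (0:ℝ) ≤ ∑ l ∈ range k, pOneMax n k l * (((k:ℝ)-l) * ((k:ℝ)-l-1) / ((l:ℝ)+1)) :=
    Finset.sum_nonneg fun l hl => mul_nonneg (hPnn l) (hXnn l hl)
  have hDkinv : 1/Delta n k ≤ Real.exp 1 * n / k := EtaAux.Delta_inv_le n k hn hk1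
  have hpow : (1+1/(n:ℝ))^(k-1) ≤ Real.exp (1/2) := EtaAux.one_add_pow_le n k hn hk2
  have hextra : (Real.exp 1 / Delta n k) *
      (∑ l ∈ range k, pOneMax n k l * (((k:ℝ)-l) * ((k:ℝ)-l-1) / ((l:ℝ)+1)))
      ≤ Real.exp 3 / n := by
    have hfrac : Real.exp 1/Delta n k ≤ Real.exp 1 * (Real.exp 1 * n / k) := by
      calc Real.exp 1/Delta n k = Real.exp 1 * (1/Delta n k) := by ring
        _ ≤ Real.exp 1 * (Real.exp 1 * n / k) := mul_le_mul_of_nonneg_left hDkinv (le_of_lt he)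
    have hsum2 : ∑ l ∈ range k, pOneMax n k l * (((k:ℝ)-l) * ((k:ℝ)-l-1) / ((l:ℝ)+1))
        ≤ Real.exp (1/2) * ((k:ℝ) * (1/(n:ℝ))^2 * Real.exp (1/2)) := by
      refine le_trans hsum ?_
      apply mul_le_mul_of_nonneg_left _ (by positivity)
      exact mul_le_mul_of_nonneg_left hpow (by positivity)
    have hfr0 : (0:ℝ) ≤ Real.exp 1/Delta n k := by positivity
    have heq : Real.exp 1 * (Real.exp 1 * n / k) * (Real.exp (1/2) * ((k:ℝ)*(1/(n:ℝ))^2*Real.exp (1/2)))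
        = Real.exp 3/n := by
      have he3 : Real.exp 1 * Real.exp 1 * Real.exp (1/2:ℝ) * Real.exp (1/2:ℝ) = Real.exp 3 := by
        rw [← Real.exp_add, ← Real.exp_add, ← Real.exp_add]
        norm_num
      rw [← he3]
      field_simp
    calc (Real.exp 1 / Delta n k) *
        (∑ l ∈ range k, pOneMax n k l * (((k:ℝ)-l) * ((k:ℝ)-l-1) / ((l:ℝ)+1)))
        ≤ (Real.exp 1 * (Real.exp 1 * n / k)) *
          (Real.exp (1/2) * ((k:ℝ)*(1/(n:ℝ))^2*Real.exp (1/2))) :=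
          mul_le_mul hfrac hsum2 hS0 (by positivity)
      _ = Real.exp 3/n := heq
  have hfinal : Real.exp 3 / (n:ℝ) ≤ 2 * Real.exp 1 ^ ((5 : ℝ) / 2) / ((n : ℝ) - 1) := by
    have hrp : Real.exp 1 ^ ((5 : ℝ) / 2) = Real.exp (5/2) := Real.exp_one_rpow _
    rw [hrp]
    have hn1 : (0:ℝ) < (n:ℝ) - 1 := by
      have : (2:ℝ) ≤ (n:ℝ) := by exact_mod_cast hn
      linarith
    rw [div_le_div_iff₀ hnp hn1]
    have he3 : Real.exp 3 = Real.exp (5/2:ℝ) * Real.exp (1/2:ℝ) := by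
      rw [← Real.exp_add]
      norm_num
    rw [he3]
    have h52 : (0:ℝ) < Real.exp (5/2:ℝ) := Real.exp_pos _
    have hint : Real.exp (5/2:ℝ)*Real.exp (1/2:ℝ)*((n:ℝ)-1) ≤ Real.exp (5/2:ℝ)*2*((n:ℝ)-1) :=
      mul_le_mul_of_nonneg_right (mul_le_mul_of_nonneg_left EtaAux.exp_half_le_two h52.le) hn1.le
    nlinarith [hint, h52, hn1]
  calc (∑ l ∈ range k, pOneMax n k l * ∑ j ∈ Icc (l + 1) k, 1 / Delta n j)
      ≤ ∑ l ∈ range k, pOneMax n k l *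
          ((((k:ℝ)-l) + Real.exp 1 * (((k:ℝ)-l) * ((k:ℝ)-l-1) / ((l:ℝ)+1))) / Delta n k) := by
        apply Finset.sum_le_sum
        intro l hl
        exact mul_le_mul_of_nonneg_left (hSl l hl) (hPnn l)
    _ = (∑ l ∈ range k, pOneMax n k l * ((k:ℝ)-l)) / Delta n k
        + (Real.exp 1 / Delta n k) *
          ∑ l ∈ range k, pOneMax n k l * (((k:ℝ)-l) * ((k:ℝ)-l-1) / ((l:ℝ)+1)) := by
        rw [Finset.sum_div, Finset.mul_sum, ← Finset.sum_add_distrib]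
        apply Finset.sum_congr rfl
        intro l _
        ring
    _ ≤ 1 + Real.exp 3 / n := by
        have h1 : (∑ l ∈ range k, pOneMax n k l * ((k:ℝ)-l)) / Delta n k ≤ 1 := by
          rw [div_le_one hDk]
          exact EtaAux.main_le n k hn hk1 hkn'
        linarith
    _ ≤ 1 + 2 * Real.exp 1 ^ ((5 : ℝ) / 2) / ((n : ℝ) - 1) := by linarith
end

section
/- For k ∈ {0, ..., n+1}, the normalized drift satisfies (1 + 1/n)^{k−1} · k/n ≤ Δ*_n(k) ≤ (1 + 1/n)^n · k/n, with equality at k = 0 and k = n+1. -/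
open Finset

/-- Normalized drift `Δ*_n(k)` of the (1+1) EA on OneMax. -/
noncomputable def deltaStar (n k : ℕ) : ℝ :=
  ∑ l ∈ Icc 1 k, ∑ j ∈ range l,
    ((l : ℝ) - j) * (k.choose l) * ((n + 1 - k).choose j) * (1 / n) ^ (j + l)

lemma binom_sum (m : ℕ) (c : ℝ) :
    ∑ j ∈ range (m + 1), (m.choose j : ℝ) * c ^ j = (1 + c) ^ m := by
  rw [add_comm (1 : ℝ) c, add_pow]
  refine Finset.sum_congr rfl fun j hj => ?_
  simp [mul_comm]

lemma binom_sum_le (m N : ℕ) (c : ℝ) (hc : 0 ≤ c) :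
    ∑ j ∈ range N, (m.choose j : ℝ) * c ^ j ≤ (1 + c) ^ m := by
  rw [← binom_sum m c]
  calc ∑ j ∈ range N, (m.choose j : ℝ) * c ^ j
      ≤ ∑ j ∈ range (N + (m + 1)), (m.choose j : ℝ) * c ^ j := by
        refine Finset.sum_le_sum_of_subset_of_nonneg
          (Finset.range_subset_range.mpr (by omega)) fun j _ _ => by positivity
    _ = ∑ j ∈ range (m + 1), (m.choose j : ℝ) * c ^ j := by
        refine (Finset.sum_subset (Finset.range_subset_range.mpr (by omega)) ?_).symm
        intro j hj hj2
        simp only [Finset.mem_range, not_lt] at hj2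
        rw [Nat.choose_eq_zero_of_lt (by omega)]
        simp

lemma L_eq (k : ℕ) (c : ℝ) :
    ∑ l ∈ Icc 1 k, (l : ℝ) * (k.choose l : ℝ) * c ^ l = k * c * (1 + c) ^ (k - 1) := by
  cases k with
  | zero => simp
  | succ K =>
    have hsub : ∑ l ∈ Icc 1 (K + 1), (l : ℝ) * ((K + 1).choose l : ℝ) * c ^ l
        = ∑ l ∈ range (K + 2), (l : ℝ) * ((K + 1).choose l : ℝ) * c ^ l := by
      refine Finset.sum_subset ?_ ?_
      · intro x hx
        simp only [Finset.mem_Icc] at hx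
        simp only [Finset.mem_range]
        omega
      · intro j hj hj2
        simp only [Finset.mem_range] at hj
        simp only [Finset.mem_Icc] at hj2
        have : j = 0 := by omega
        subst this
        simp
    rw [hsub, Finset.sum_range_succ']
    have hstep : ∀ i : ℕ, ((i : ℝ) + 1) * ((K + 1).choose (i + 1) : ℝ) * c ^ (i + 1)
        = ((K : ℝ) + 1) * c * ((K.choose i : ℝ) * c ^ i) := by
      intro i
      have h := Nat.add_one_mul_choose_eq K i
      have h' : ((K : ℝ) + 1) * (K.choose i : ℝ)
          = ((K + 1).choose (i + 1) : ℝ) * ((i : ℝ) + 1) := by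
        exact_mod_cast congrArg (Nat.cast : ℕ → ℝ) h
      linear_combination (-(c ^ i * c)) * h'
    push_cast
    rw [Finset.sum_congr rfl fun i _ => hstep i, ← Finset.mul_sum, binom_sum]
    simp

/-- For `k ∈ {0, …, n+1}` the normalized drift satisfies
`(1 + 1/n)^{k−1} · k/n ≤ Δ*_n(k) ≤ (1 + 1/n)^n · k/n`,
with equality at `k = 0` and `k = n + 1`. -/
theorem deltaStar_bounds (n k : ℕ) (hn : 1 ≤ n) (hk : k ≤ n + 1) :
    ((1 + 1 / (n : ℝ)) ^ (k - 1) * (k / n) ≤ deltaStar n k ∧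
      deltaStar n k ≤ (1 + 1 / (n : ℝ)) ^ n * (k / n)) ∧
    ((k = 0 ∨ k = n + 1) →
      (1 + 1 / (n : ℝ)) ^ (k - 1) * (k / n) = deltaStar n k ∧
        deltaStar n k = (1 + 1 / (n : ℝ)) ^ n * (k / n)) := by
  have hn0 : (0:ℝ) < (n:ℝ) := by exact_mod_cast hn
  have hc0 : (0:ℝ) < 1 / (n:ℝ) := by positivity
  have hterm_nonneg : ∀ l ∈ Icc 1 k, ∀ j ∈ range l,
      (0:ℝ) ≤ ((l : ℝ) - j) * (k.choose l) * ((n + 1 - k).choose j) * (1 / (n:ℝ)) ^ (j + l) := by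
    intro l hl j hj
    have hjl : j < l := Finset.mem_range.mp hj
    have h1 : (0:ℝ) ≤ (l:ℝ) - j := by
      have : (j:ℝ) ≤ (l:ℝ) := by exact_mod_cast hjl.le
      linarith
    exact mul_nonneg (mul_nonneg (mul_nonneg h1 (by positivity)) (by positivity)) (by positivity)
  -- Lower bound
  have hLB : (k:ℝ) * (1 / (n:ℝ)) * (1 + 1 / (n:ℝ)) ^ (k - 1) ≤ deltaStar n k := by
    rw [← L_eq k (1 / (n:ℝ))]
    unfold deltaStar
    refine Finset.sum_le_sum fun l hl => ?_
    have hl1 : 1 ≤ l := (Finset.mem_Icc.mp hl).1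
    have h0mem : (0:ℕ) ∈ range l := Finset.mem_range.mpr hl1
    have hs := Finset.single_le_sum
      (f := fun j => ((l : ℝ) - j) * (k.choose l) * ((n + 1 - k).choose j) * (1 / (n:ℝ)) ^ (j + l))
      (fun j hj => hterm_nonneg l hl j hj) h0mem
    calc (l:ℝ) * (k.choose l : ℝ) * (1 / (n:ℝ)) ^ l
        = ((l : ℝ) - (0:ℕ)) * (k.choose l) * (((n + 1 - k).choose 0 : ℕ) : ℝ)
            * (1 / (n:ℝ)) ^ (0 + l) := by simp
      _ ≤ _ := hs
  -- Upper bound (raw form)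
  have hUB : deltaStar n k ≤
      (k:ℝ) * (1 / (n:ℝ)) * (1 + 1 / (n:ℝ)) ^ (k - 1) * (1 + 1 / (n:ℝ)) ^ (n + 1 - k) := by
    have step : deltaStar n k ≤
        ∑ l ∈ Icc 1 k, (l:ℝ) * (k.choose l : ℝ) * (1 / (n:ℝ)) ^ l
          * (1 + 1 / (n:ℝ)) ^ (n + 1 - k) := by
      unfold deltaStar
      refine Finset.sum_le_sum fun l hl => ?_
      calc ∑ j ∈ range l,
            ((l : ℝ) - j) * (k.choose l) * ((n + 1 - k).choose j) * (1 / (n:ℝ)) ^ (j + l)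
          ≤ ∑ j ∈ range l,
            (l:ℝ) * (k.choose l : ℝ) * (1 / (n:ℝ)) ^ l
              * (((n + 1 - k).choose j : ℝ) * (1 / (n:ℝ)) ^ j) := by
            refine Finset.sum_le_sum fun j hj => ?_
            have e1 : ((l : ℝ) - j) * (k.choose l) * ((n + 1 - k).choose j)
                * (1 / (n:ℝ)) ^ (j + l)
                = ((l:ℝ) - j) * ((k.choose l : ℝ) * ((n + 1 - k).choose j : ℝ)
                  * ((1 / (n:ℝ)) ^ j * (1 / (n:ℝ)) ^ l)) := by
              rw [pow_add]; ring
            have e2 : (l:ℝ) * (k.choose l : ℝ) * (1 / (n:ℝ)) ^ l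
                * (((n + 1 - k).choose j : ℝ) * (1 / (n:ℝ)) ^ j)
                = (l:ℝ) * ((k.choose l : ℝ) * ((n + 1 - k).choose j : ℝ)
                  * ((1 / (n:ℝ)) ^ j * (1 / (n:ℝ)) ^ l)) := by ring
            rw [e1, e2]
            refine mul_le_mul_of_nonneg_right ?_ (by positivity)
            have : (0:ℝ) ≤ (j:ℝ) := by positivity
            linarith
        _ = (l:ℝ) * (k.choose l : ℝ) * (1 / (n:ℝ)) ^ l
              * ∑ j ∈ range l, (((n + 1 - k).choose j : ℝ) * (1 / (n:ℝ)) ^ j) := by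
            rw [Finset.mul_sum]
        _ ≤ (l:ℝ) * (k.choose l : ℝ) * (1 / (n:ℝ)) ^ l
              * (1 + 1 / (n:ℝ)) ^ (n + 1 - k) := by
            refine mul_le_mul_of_nonneg_left ?_ (by positivity)
            exact binom_sum_le (n + 1 - k) l (1 / (n:ℝ)) hc0.le
    calc deltaStar n k ≤ _ := step
      _ = (∑ l ∈ Icc 1 k, (l:ℝ) * (k.choose l : ℝ) * (1 / (n:ℝ)) ^ l)
            * (1 + 1 / (n:ℝ)) ^ (n + 1 - k) := by rw [Finset.sum_mul]
      _ = (k:ℝ) * (1 / (n:ℝ)) * (1 + 1 / (n:ℝ)) ^ (k - 1)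
            * (1 + 1 / (n:ℝ)) ^ (n + 1 - k) := by rw [L_eq]
  have hpow : k ≠ 0 → (1 + 1 / (n:ℝ)) ^ (k - 1) * (1 + 1 / (n:ℝ)) ^ (n + 1 - k)
      = (1 + 1 / (n:ℝ)) ^ n := by
    intro hk0
    rw [← pow_add]
    congr 1
    omega
  constructor
  · constructor
    · calc (1 + 1 / (n : ℝ)) ^ (k - 1) * ((k:ℝ) / n)
          = (k:ℝ) * (1 / (n:ℝ)) * (1 + 1 / (n:ℝ)) ^ (k - 1) := by ring
        _ ≤ deltaStar n k := hLB
    · rcases Nat.eq_zero_or_pos k with hk0 | hk1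
      · subst hk0
        have : deltaStar n 0 = 0 := by simp [deltaStar]
        rw [this]
        simp
      · calc deltaStar n k ≤ _ := hUB
          _ = (1 + 1 / (n : ℝ)) ^ n * ((k:ℝ) / n) := by
            rw [mul_assoc, hpow (by omega)]; ring
  · rintro (hk0 | hkn)
    · subst hk0
      have : deltaStar n 0 = 0 := by simp [deltaStar]
      rw [this]
      simp
    · subst hkn
      have hm : n + 1 - (n + 1) = 0 := by omega
      have hDS : deltaStar n (n + 1)
          = ∑ l ∈ Icc 1 (n + 1), (l:ℝ) * ((n + 1).choose l : ℝ) * (1 / (n:ℝ)) ^ l := by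
        unfold deltaStar
        refine Finset.sum_congr rfl fun l hl => ?_
        have hl1 : 1 ≤ l := (Finset.mem_Icc.mp hl).1
        rw [Finset.sum_eq_single_of_mem 0 (Finset.mem_range.mpr hl1)]
        · simp
        · intro j hj hj0
          rw [hm, Nat.choose_eq_zero_of_lt (Nat.pos_of_ne_zero hj0)]
          simp
      rw [hDS, L_eq]
      have h1 : n + 1 - 1 = n := by omega
      rw [h1]
      constructor <;> push_cast <;> ring
end

section
/- For 0 ≤ α ≤ 1, the function S_1(α) := Σ_{ℓ≥0} (α^ℓ/ℓ!) Σ_{j=0}^{ℓ−1} (ℓ−j)(1−α)^j/j! equals the coefficient of z^{−1} in the Laurent expansion of e^{α/z + (1−α)z}/(1−z)², i.e., S_1(α) = [z^{−1}] e^{α/z + (1−α)z}/(1−z)². -/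
open Finset Complex

/-- The limiting normalized drift function
`S₁(α) = ∑_{ℓ≥0} (α^ℓ/ℓ!) ∑_{j=0}^{ℓ−1} (ℓ−j)(1−α)^j/j!`. -/
noncomputable def S1 (α : ℝ) : ℝ :=
  ∑' l : ℕ, (α ^ l / Nat.factorial l) *
    ∑ j ∈ range l, ((l : ℝ) - j) * (1 - α) ^ j / Nat.factorial j

open MeasureTheory Metric

set_option maxHeartbeats 1000000

/-- Coefficient of the triple-indexed Laurent expansion term. -/
noncomputable def Fcoef (a : ℂ) (p : ℕ × ℕ × ℕ) : ℂ :=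
  a ^ p.1 / p.1.factorial * ((1 - a) ^ p.2.1 / p.2.1.factorial) * ((p.2.2 : ℂ) + 1)

/-- Exponent of the triple-indexed Laurent expansion term. -/
def Fexp (p : ℕ × ℕ × ℕ) : ℤ := (p.2.1 : ℤ) + p.2.2 - p.1

lemma Fterm_eq (a : ℂ) {z : ℂ} (hz0 : z ≠ 0) (p : ℕ × ℕ × ℕ) :
    Fcoef a p * z ^ Fexp p = ((a / z) ^ p.1 / p.1.factorial) *
      ((((1 - a) * z) ^ p.2.1 / p.2.1.factorial) * (((p.2.2 : ℂ) + 1) * z ^ p.2.2)) := by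
  obtain ⟨l, j, k⟩ := p
  simp only [Fcoef, Fexp]
  rw [zpow_sub₀ hz0, zpow_add₀ hz0, zpow_natCast, zpow_natCast, zpow_natCast,
    div_pow, mul_pow]
  ring

lemma summable_norm_n3 {z : ℂ} (hz1 : ‖z‖ < 1) :
    Summable fun k : ℕ => ‖((k : ℂ) + 1) * z ^ k‖ := by
  have : Summable fun k : ℕ => ((k : ℝ) + 1) * ‖z‖ ^ k := by
    have hz1' : ‖(‖z‖)‖ < 1 := by simpa [_root_.abs_of_nonneg (norm_nonneg z)] using hz1
    exact ((hasSum_coe_mul_geometric_of_norm_lt_one hz1').add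
      (hasSum_geometric_of_norm_lt_one hz1')).summable.congr (fun k => by ring)
  refine this.congr fun k => ?_
  rw [norm_mul, norm_pow]
  congr 1
  have : ((k : ℂ) + 1) = ((k + 1 : ℕ) : ℂ) := by push_cast; ring
  rw [this, Complex.norm_natCast]
  push_cast; ring

lemma summable_norm_expansion (a : ℂ) {z : ℂ} (hz0 : z ≠ 0) (hz1 : ‖z‖ < 1) :
    Summable fun p : ℕ × ℕ × ℕ => ‖Fcoef a p * z ^ Fexp p‖ := by
  have n1 : Summable fun l : ℕ => ‖(a / z) ^ l / (l.factorial : ℂ)‖ :=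
    NormedSpace.norm_expSeries_div_summable _
  have n2 : Summable fun j : ℕ => ‖((1 - a) * z) ^ j / (j.factorial : ℂ)‖ :=
    NormedSpace.norm_expSeries_div_summable _
  have n3 := summable_norm_n3 hz1
  exact (n1.mul_norm (n2.mul_norm n3)).congr fun p => by rw [← Fterm_eq a hz0 p]

lemma hasSum_expansion (a : ℂ) {z : ℂ} (hz0 : z ≠ 0) (hz1 : ‖z‖ < 1) :
    HasSum (fun p : ℕ × ℕ × ℕ => Fcoef a p * z ^ Fexp p)
      (Complex.exp (a / z + (1 - a) * z) / (1 - z) ^ 2) := by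
  have h1z : (1 : ℂ) - z ≠ 0 := by
    intro h
    have : z = 1 := by linear_combination -h
    rw [this] at hz1; simp at hz1
  have h1 : HasSum (fun l : ℕ => (a / z) ^ l / l.factorial) (Complex.exp (a / z)) := by
    rw [Complex.exp_eq_exp_ℂ]; exact NormedSpace.expSeries_div_hasSum_exp _
  have h2 : HasSum (fun j : ℕ => ((1 - a) * z) ^ j / j.factorial)
      (Complex.exp ((1 - a) * z)) := by
    rw [Complex.exp_eq_exp_ℂ]; exact NormedSpace.expSeries_div_hasSum_exp _
  have h3 : HasSum (fun k : ℕ => ((k : ℂ) + 1) * z ^ k) (1 / (1 - z) ^ 2) := by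
    have hn : HasSum (fun k : ℕ => (k : ℂ) * z ^ k) (z / (1 - z) ^ 2) :=
      hasSum_coe_mul_geometric_of_norm_lt_one hz1
    have hg : HasSum (fun k : ℕ => z ^ k) (1 - z)⁻¹ :=
      hasSum_geometric_of_norm_lt_one hz1
    have := hn.add hg
    have heq : (fun k : ℕ => (k : ℂ) * z ^ k + z ^ k)
        = fun k : ℕ => ((k : ℂ) + 1) * z ^ k := by
      funext k; ring
    rw [heq] at this
    convert this using 1
    field_simp
    ring
  have n1 : Summable fun l : ℕ => ‖(a / z) ^ l / (l.factorial : ℂ)‖ :=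
    NormedSpace.norm_expSeries_div_summable _
  have n2 : Summable fun j : ℕ => ‖((1 - a) * z) ^ j / (j.factorial : ℂ)‖ :=
    NormedSpace.norm_expSeries_div_summable _
  have n3 := summable_norm_n3 hz1
  have h23 : HasSum (fun q : ℕ × ℕ => (((1 - a) * z) ^ q.1 / q.1.factorial) *
      (((q.2 : ℂ) + 1) * z ^ q.2)) (Complex.exp ((1 - a) * z) * (1 / (1 - z) ^ 2)) :=
    HasSum.mul (f := fun j : ℕ => ((1 - a) * z) ^ j / j.factorial)
      (g := fun k : ℕ => ((k : ℂ) + 1) * z ^ k) h2 h3 (n2.mul_norm n3).of_norm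
  have hfull : HasSum (fun p : ℕ × ℕ × ℕ => ((a / z) ^ p.1 / p.1.factorial) *
      ((((1 - a) * z) ^ p.2.1 / p.2.1.factorial) * (((p.2.2 : ℂ) + 1) * z ^ p.2.2)))
      (Complex.exp (a / z) * (Complex.exp ((1 - a) * z) * (1 / (1 - z) ^ 2))) :=
    HasSum.mul (f := fun l : ℕ => (a / z) ^ l / l.factorial)
      (g := fun q : ℕ × ℕ => (((1 - a) * z) ^ q.1 / q.1.factorial) *
        (((q.2 : ℂ) + 1) * z ^ q.2))
      h1 h23 (n1.mul_norm (n2.mul_norm n3)).of_norm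
  have heq : (fun p : ℕ × ℕ × ℕ => Fcoef a p * z ^ Fexp p)
      = fun p : ℕ × ℕ × ℕ => ((a / z) ^ p.1 / p.1.factorial) *
        ((((1 - a) * z) ^ p.2.1 / p.2.1.factorial) * (((p.2.2 : ℂ) + 1) * z ^ p.2.2)) :=
    funext fun p => Fterm_eq a hz0 p
  rw [heq]
  convert hfull using 1
  rw [Complex.exp_add]
  ring

lemma circleIntegral_zpow_eq (n : ℤ) {R : ℝ} (hR : 0 < R) :
    (∮ z in C((0:ℂ), R), z ^ n) = if n = -1 then 2 * Real.pi * Complex.I else 0 := by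
  split_ifs with h
  · subst h
    have := circleIntegral.integral_sub_inv_of_mem_ball
      (c := (0:ℂ)) (w := 0) (R := R) (by simpa using hR)
    simpa [zpow_neg, zpow_one] using this
  · have := circleIntegral.integral_sub_zpow_of_ne h (0:ℂ) 0 R
    simpa using this

lemma circleIntegral_tsum_aux {ι : Type*} [Countable ι] (f : ι → ℂ → ℂ) (c : ℂ) {R : ℝ}
    (hR : 0 < R) (hcont : ∀ i, ContinuousOn (f i) (sphere c R))
    (b : ι → ℝ) (hb : Summable b)
    (hfb : ∀ i, ∀ z ∈ sphere c R, ‖f i z‖ ≤ b i) :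
    (∮ z in C(c, R), ∑' i, f i z) = ∑' i, ∮ z in C(c, R), f i z := by
  have hbnn : ∀ i, 0 ≤ b i := fun i =>
    le_trans (norm_nonneg _) (hfb i _ (circleMap_mem_sphere c hR.le 0))
  have hcont' : ∀ i, Continuous fun θ : ℝ =>
      (circleMap 0 R θ * Complex.I) * f i (circleMap c R θ) := fun i => by
    exact ((continuous_circleMap 0 R).mul continuous_const).mul
      ((hcont i).comp_continuous (continuous_circleMap c R)
        (fun θ => circleMap_mem_sphere c hR.le θ))
  simp only [circleIntegral, deriv_circleMap, smul_eq_mul]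
  rw [intervalIntegral.integral_of_le Real.two_pi_pos.le]
  have h2 : ∀ i, ∫ θ in Set.Ioc (0:ℝ) (2*Real.pi), (circleMap 0 R θ * Complex.I) * f i (circleMap c R θ)
      = ∫ θ in (0:ℝ)..(2*Real.pi), (circleMap 0 R θ * Complex.I) * f i (circleMap c R θ) := fun i =>
    (intervalIntegral.integral_of_le Real.two_pi_pos.le).symm
  calc (∫ θ in Set.Ioc (0:ℝ) (2*Real.pi),
          (circleMap 0 R θ * Complex.I) * ∑' i, f i (circleMap c R θ))
      = ∫ θ in Set.Ioc (0:ℝ) (2*Real.pi),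
          ∑' i, (circleMap 0 R θ * Complex.I) * f i (circleMap c R θ) := by
        simp_rw [tsum_mul_left]
    _ = ∑' i, ∫ θ in Set.Ioc (0:ℝ) (2*Real.pi),
          (circleMap 0 R θ * Complex.I) * f i (circleMap c R θ) := by
        apply MeasureTheory.integral_tsum
        · exact fun i => ((hcont' i)).aestronglyMeasurable
        · have hbd : ∀ i, (∫⁻ θ in Set.Ioc (0:ℝ) (2*Real.pi),
              ‖(circleMap 0 R θ * Complex.I) * f i (circleMap c R θ)‖₊)
              ≤ ENNReal.ofReal (R * b i) * ENNReal.ofReal (2*Real.pi) := by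
            intro i
            have : ∀ θ : ℝ, (‖(circleMap 0 R θ * Complex.I) * f i (circleMap c R θ)‖₊ : ENNReal)
                ≤ ENNReal.ofReal (R * b i) := by
              intro θ
              rw [← enorm_eq_nnnorm, ← ofReal_norm]
              apply ENNReal.ofReal_le_ofReal
              have : ‖(circleMap 0 R θ * Complex.I) * f i (circleMap c R θ)‖
                  = R * ‖f i (circleMap c R θ)‖ := by
                simp [norm_mul, norm_circleMap_zero, abs_of_pos hR]
              rw [this]
              exact mul_le_mul_of_nonneg_left
                (hfb i _ (circleMap_mem_sphere c hR.le θ)) hR.le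
            calc (∫⁻ θ in Set.Ioc (0:ℝ) (2*Real.pi),
                ‖(circleMap 0 R θ * Complex.I) * f i (circleMap c R θ)‖₊)
                ≤ ∫⁻ _ in Set.Ioc (0:ℝ) (2*Real.pi), ENNReal.ofReal (R * b i) :=
                  lintegral_mono fun θ => this θ
              _ = ENNReal.ofReal (R * b i) * ENNReal.ofReal (2*Real.pi) := by
                  rw [MeasureTheory.setLIntegral_const]
                  simp [Real.volume_Ioc]
          refine ne_top_of_le_ne_top ?_ (ENNReal.tsum_le_tsum hbd)
          rw [ENNReal.tsum_mul_right]
          apply ENNReal.mul_ne_top _ ENNReal.ofReal_ne_top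
          rw [← ENNReal.ofReal_tsum_of_nonneg (fun i => mul_nonneg hR.le (hbnn i))
            (hb.mul_left R)]
          exact ENNReal.ofReal_ne_top
    _ = ∑' i, ∫ θ in (0:ℝ)..(2*Real.pi),
          (circleMap 0 R θ * Complex.I) * f i (circleMap c R θ) := by
        exact tsum_congr h2

/-- For `0 ≤ α ≤ 1`, `S₁(α)` equals the coefficient of `z⁻¹` in the Laurent
expansion of `e^{α/z + (1−α)z}/(1−z)²` around `0`, expressed as the residue at
`0`, i.e. as `(2πi)⁻¹` times the contour integral over a small circle around
the origin. -/
theorem S1_eq_laurent_coeff (α : ℝ) (h0 : 0 ≤ α) (h1 : α ≤ 1)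
    (r : ℝ) (hr0 : 0 < r) (hr1 : r < 1) :
    (2 * Real.pi * Complex.I)⁻¹ *
      (∮ z in C(0, r),
        Complex.exp ((α : ℂ) / z + (1 - (α : ℂ)) * z) / (1 - z) ^ 2)
      = (S1 α : ℂ) := by
  set a : ℂ := (α : ℂ) with ha
  have hπ : (2 * (Real.pi : ℂ) * Complex.I) ≠ 0 := by
    simp [Real.pi_ne_zero, Complex.I_ne_zero]
  -- facts about points on the sphere
  have hsph : ∀ z ∈ sphere (0 : ℂ) r, z ≠ 0 ∧ ‖z‖ < 1 := by
    intro z hz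
    rw [mem_sphere_zero_iff_norm] at hz
    constructor
    · intro h; rw [h, norm_zero] at hz; exact hr0.ne' hz.symm
    · rw [hz]; exact hr1
  have hrc0 : ((r : ℂ)) ≠ 0 := by
    simpa using hr0.ne'
  have hrc1 : ‖((r : ℂ))‖ < 1 := by
    rw [Complex.norm_real, Real.norm_eq_abs, _root_.abs_of_pos hr0]; exact hr1
  -- the uniform bound
  set b : ℕ × ℕ × ℕ → ℝ := fun p => ‖Fcoef a p * (r : ℂ) ^ Fexp p‖ with hbdef
  have hb : Summable b := summable_norm_expansion a hrc0 hrc1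
  have hbval : ∀ p, b p = ‖Fcoef a p‖ * r ^ Fexp p := by
    intro p
    rw [hbdef]
    simp only
    rw [norm_mul, norm_zpow, Complex.norm_real, Real.norm_eq_abs, _root_.abs_of_pos hr0]
  have hfb : ∀ p : ℕ × ℕ × ℕ, ∀ z ∈ sphere (0 : ℂ) r, ‖Fcoef a p * z ^ Fexp p‖ = b p := by
    intro p z hz
    rw [mem_sphere_zero_iff_norm] at hz
    rw [norm_mul, norm_zpow, hz, hbval]
  -- Step 1 : replace the integrand by its Laurent series
  have step1 : (∮ z in C(0, r), Complex.exp (a / z + (1 - a) * z) / (1 - z) ^ 2)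
      = ∮ z in C(0, r), ∑' p : ℕ × ℕ × ℕ, Fcoef a p * z ^ Fexp p := by
    refine circleIntegral.integral_congr hr0.le fun z hz => ?_
    exact ((hasSum_expansion a (hsph z hz).1 (hsph z hz).2).tsum_eq).symm
  -- Step 2 : interchange sum and integral
  have step2 : (∮ z in C(0, r), ∑' p : ℕ × ℕ × ℕ, Fcoef a p * z ^ Fexp p)
      = ∑' p : ℕ × ℕ × ℕ, ∮ z in C(0, r), Fcoef a p * z ^ Fexp p := by
    refine circleIntegral_tsum_aux _ _ hr0 ?_ b hb ?_
    · intro p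
      exact continuousOn_const.mul ((continuousOn_zpow₀ (Fexp p)).mono
        (fun z hz => (hsph z hz).1))
    · intro p z hz
      exact le_of_eq (hfb p z hz)
  -- Step 3 : evaluate each integral
  set G : ℕ × ℕ × ℕ → ℂ :=
    fun p => Fcoef a p * (if Fexp p = -1 then 2 * (Real.pi : ℂ) * Complex.I else 0) with hGdef
  have step3 : ∀ p : ℕ × ℕ × ℕ, (∮ z in C(0, r), Fcoef a p * z ^ Fexp p) = G p := by
    intro p
    rw [circleIntegral.integral_const_mul, circleIntegral_zpow_eq _ hr0]
  have hnormπ : ‖(2 * (Real.pi : ℂ) * Complex.I)‖ = 2 * Real.pi := by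
    simp [_root_.abs_of_nonneg Real.pi_pos.le]
  -- Step 4 : summability of the term-wise integrals
  have hG : Summable G := by
    refine Summable.of_norm (Summable.of_nonneg_of_le (fun p => norm_nonneg _) ?_
      (hb.mul_left (2 * Real.pi * r)))
    intro p
    rw [hGdef]; simp only
    by_cases h : Fexp p = -1
    · rw [if_pos h, norm_mul, hnormπ, hbval, h, zpow_neg_one]
      apply le_of_eq
      field_simp
    · rw [if_neg h, mul_zero, norm_zero]
      have : 0 ≤ b p := norm_nonneg _
      positivity
  -- Step 5 : evaluate the triple sum
  have hk : ∀ l j : ℕ, (∑' k : ℕ, G (l, j, k)) = if j < l then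
      a ^ l / l.factorial * ((1 - a) ^ j / j.factorial) * ((l : ℂ) - j) *
        (2 * (Real.pi : ℂ) * Complex.I) else 0 := by
    intro l j
    by_cases hjl : j < l
    · rw [if_pos hjl]
      rw [tsum_eq_single (l - 1 - j) (fun k hkne => by
        have hcond : ¬ Fexp (l, j, k) = -1 := by simp only [Fexp]; omega
        rw [hGdef]; simp only; rw [if_neg hcond, mul_zero])]
      have hcond : Fexp (l, j, l - 1 - j) = -1 := by simp only [Fexp]; omega
      rw [hGdef]; simp only
      rw [if_pos hcond]
      simp only [Fcoef]
      have hcast : ((l - 1 - j : ℕ) : ℂ) + 1 = (l : ℂ) - j := by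
        have h : (l - 1 - j : ℕ) + (j + 1) = l := by omega
        have h2 := congrArg (fun n : ℕ => (n : ℂ)) h
        push_cast at h2
        linear_combination h2
      rw [hcast]
    · rw [if_neg hjl]
      have hzero : ∀ k : ℕ, G (l, j, k) = 0 := fun k => by
        have hcond : ¬ Fexp (l, j, k) = -1 := by simp only [Fexp]; omega
        rw [hGdef]; simp only; rw [if_neg hcond, mul_zero]
      rw [tsum_congr hzero]; exact tsum_zero
  have hinner : ∀ l : ℕ, (∑' q : ℕ × ℕ, G (l, q))
      = 2 * (Real.pi : ℂ) * Complex.I * (a ^ l / l.factorial *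
          ∑ j ∈ range l, ((l : ℂ) - j) * (1 - a) ^ j / j.factorial) := by
    intro l
    rw [Summable.tsum_prod (hG.prod_factor l)]
    rw [tsum_congr (fun j => hk l j)]
    rw [tsum_eq_sum (s := range l) (fun j hj => if_neg (by simpa using hj))]
    rw [Finset.mul_sum, Finset.mul_sum]
    refine Finset.sum_congr rfl fun j hj => ?_
    rw [if_pos (mem_range.mp hj)]
    ring
  have step4 : (∑' p : ℕ × ℕ × ℕ, G p)
      = 2 * (Real.pi : ℂ) * Complex.I * ∑' l : ℕ, (a ^ l / l.factorial *
          ∑ j ∈ range l, ((l : ℂ) - j) * (1 - a) ^ j / j.factorial) := by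
    rw [Summable.tsum_prod hG, tsum_congr hinner, tsum_mul_left]
  have hS1 : (S1 α : ℂ) = ∑' l : ℕ, (a ^ l / l.factorial *
      ∑ j ∈ range l, ((l : ℂ) - j) * (1 - a) ^ j / j.factorial) := by
    rw [S1, Complex.ofReal_tsum]
    refine tsum_congr fun l => ?_
    push_cast
    ring
  rw [step1, step2, tsum_congr step3, step4, hS1, ← mul_assoc, inv_mul_cancel₀ hπ, one_mul]
end
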